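/- arXiv:2207.01678 — 6 statements merged into one kernel-verified Lean document; each statement's English description precedes it below -/
import Mathlib

section
/- Assume the additive model Y = h(Xⱼ) + H(X₋ⱼ) + ε, where h is monotonic and its derivative h′ is integrable and bounded in absolute value on [0,1], E|H(X₋ⱼ)| < ∞, and ε is integrable with E ε = 0 and independent of X, and assume the distribution of X has a density. Then |κⱼ^{(1)}| ≥ (inf_{x∈[0,1]} |h′(x)|) · E[Var(Xⱼ | X₋ⱼ)], where κⱼ^{(1)} = E{[Y − E(Y | X₋ⱼ)][Xⱼ − E Xⱼ]}. -/
open MeasureTheory ProbabilityTheory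


private lemma deriv_nonneg_of_monotoneOn {f : ℝ → ℝ} {d x : ℝ} (hx : x ∈ Set.Ioo (0:ℝ) 1)
    (hf : HasDerivAt f d x) (hm : MonotoneOn f (Set.Icc 0 1)) : 0 ≤ d := by
  rw [hasDerivAt_iff_tendsto_slope] at hf
  refine ge_of_tendsto hf ?_
  filter_upwards [self_mem_nhdsWithin,
    mem_nhdsWithin_of_mem_nhds (Icc_mem_nhds hx.1 hx.2)] with y hy hyI
  have hxI : x ∈ Set.Icc (0:ℝ) 1 := Set.Ioo_subset_Icc_self hx
  rw [slope_def_field]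
  rcases lt_or_gt_of_ne (hy : y ≠ x) with hlt | hgt
  · exact div_nonneg_iff.2 (Or.inr ⟨sub_nonpos.2 (hm hyI hxI hlt.le), sub_nonpos.2 hlt.le⟩)
  · exact div_nonneg (sub_nonneg.2 (hm hxI hyI hgt.le)) (sub_nonneg.2 hgt.le)

private theorem aux_stmt7 {Ω : Type} {m : MeasurableSpace Ω} [m0 : MeasurableSpace Ω]
    (hm : m ≤ m0) (μ : Measure Ω) [IsProbabilityMeasure μ]
    (Xj : Ω → ℝ) (hXjmeas : Measurable Xj) (hXjI : ∀ ω, Xj ω ∈ Set.Icc (0:ℝ) 1)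
    (h h' : ℝ → ℝ) (hh : Measurable h)
    (hderiv : ∀ x ∈ Set.Icc (0 : ℝ) 1, HasDerivWithinAt h (h' x) (Set.Icc (0 : ℝ) 1) x)
    (hmono : MonotoneOn h (Set.Icc (0 : ℝ) 1) ∨ AntitoneOn h (Set.Icc (0 : ℝ) 1))
    (G : Ω → ℝ) (hG : StronglyMeasurable[m] G) (hGint : Integrable G μ)
    (ε : Ω → ℝ) (hε : Measurable ε) (hεint : Integrable ε μ)
    (hεmean : ∫ ω, ε ω ∂μ = 0)
    (hIεm : Indep (MeasurableSpace.comap ε inferInstance) m μ)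
    (hIεX : IndepFun ε Xj μ)
    (Y : Ω → ℝ) (hYdef : ∀ ω, Y ω = h (Xj ω) + G ω + ε ω) :
    sInf ((fun x => |h' x|) '' Set.Icc (0 : ℝ) 1)
        * ∫ ω, (Xj ω - (μ[Xj|m]) ω) ^ 2 ∂μ ≤
      |∫ ω, (Y ω - (μ[Y|m]) ω) * (Xj ω - ∫ ω', Xj ω' ∂μ) ∂μ| := by
  classical
  haveI hsf : SigmaFinite (μ.trim hm) := inferInstance
  set c : ℝ := sInf ((fun x => |h' x|) '' Set.Icc (0 : ℝ) 1) with hcdef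
  have hc0 : 0 ≤ c := Real.sInf_nonneg (by rintro y ⟨x, -, rfl⟩; exact abs_nonneg _)
  have hcle : ∀ x ∈ Set.Icc (0:ℝ) 1, c ≤ |h' x| := fun x hx =>
    csInf_le ⟨0, by rintro y ⟨z, -, rfl⟩; exact abs_nonneg _⟩ ⟨x, hx, rfl⟩
  -- basic integrability
  have bdd_int : ∀ (F : Ω → ℝ) (C : ℝ), Measurable F → (∀ ω, ‖F ω‖ ≤ C) → Integrable F μ := by
    intro F C hFm hFb
    exact Integrable.mono' (integrable_const C) hFm.aestronglyMeasurable (ae_of_all _ hFb)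
  have hXjn : ∀ ω, ‖Xj ω‖ ≤ 1 := by
    intro ω
    rw [Real.norm_eq_abs, abs_le]
    exact ⟨le_trans (by norm_num) (hXjI ω).1, (hXjI ω).2⟩
  have iXj : Integrable Xj μ := bdd_int Xj 1 hXjmeas hXjn
  have hcont : ContinuousOn h (Set.Icc (0:ℝ) 1) := fun x hx => (hderiv x hx).continuousWithinAt
  obtain ⟨Ch, hCh⟩ := isCompact_Icc.exists_bound_of_continuousOn hcont
  have ihXj : Integrable (fun ω => h (Xj ω)) μ :=
    bdd_int _ Ch (hh.comp hXjmeas) fun ω => hCh _ (hXjI ω)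
  -- conditional expectation bounds
  have condexp_bound : ∀ (F : Ω → ℝ) (a b : ℝ), Integrable F μ →
      (∀ ω, F ω ∈ Set.Icc a b) → ∀ᵐ ω ∂μ, (μ[F|m]) ω ∈ Set.Icc a b := by
    intro F a b hFi hFab
    have hlow : (μ[(fun _ => a : Ω → ℝ)|m]) ≤ᵐ[μ] μ[F|m] :=
      condExp_mono (integrable_const a) hFi (ae_of_all _ fun ω => (hFab ω).1)
    have hhigh : μ[F|m] ≤ᵐ[μ] (μ[(fun _ => b : Ω → ℝ)|m]) :=
      condExp_mono hFi (integrable_const b) (ae_of_all _ fun ω => (hFab ω).2)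
    rw [condExp_const hm] at hlow hhigh
    filter_upwards [hlow, hhigh] with ω h1 h2 using ⟨h1, h2⟩
  -- pull-out identity
  have pullout : ∀ (ψ F : Ω → ℝ) (C : ℝ), StronglyMeasurable[m] ψ →
      (∀ᵐ ω ∂μ, ‖ψ ω‖ ≤ C) → Integrable F μ →
      ∫ ω, ψ ω * (F ω - (μ[F|m]) ω) ∂μ = 0 := by
    intro ψ F C hψ hψb hF
    have hψae : AEStronglyMeasurable ψ μ := (hψ.mono hm).aestronglyMeasurable
    have h1 : Integrable (ψ * F) μ := hF.bdd_mul hψae hψb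
    have h2 : Integrable (fun ω => ψ ω * (μ[F|m]) ω) μ := integrable_condExp.bdd_mul hψae hψb
    have e1 : ∫ ω, (μ[ψ * F|m]) ω ∂μ = ∫ ω, ψ ω * F ω ∂μ := integral_condExp hm
    have e2 : ∫ ω, (μ[ψ * F|m]) ω ∂μ = ∫ ω, ψ ω * (μ[F|m]) ω ∂μ :=
      integral_congr_ae (condExp_mul_of_stronglyMeasurable_left hψ h1 hF)
    have hsplit : ∫ ω, ψ ω * (F ω - (μ[F|m]) ω) ∂μ
        = ∫ ω, ψ ω * F ω ∂μ - ∫ ω, ψ ω * (μ[F|m]) ω ∂μ := by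
      simp_rw [mul_sub]
      exact integral_sub h1 h2
    rw [hsplit, ← e1, e2, sub_self]
  -- main objects
  set W : Ω → ℝ := μ[Xj|m] with hWdef
  set K : Ω → ℝ := μ[(fun ω => h (Xj ω))|m] with hKdef
  have hWsm : StronglyMeasurable[m] W := stronglyMeasurable_condExp
  have hKsm : StronglyMeasurable[m] K := stronglyMeasurable_condExp
  have hWae : ∀ᵐ ω ∂μ, W ω ∈ Set.Icc (0:ℝ) 1 := condexp_bound Xj 0 1 iXj hXjI
  have hKb : ∀ᵐ ω ∂μ, ‖K ω‖ ≤ Ch := by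
    have := condexp_bound _ (-Ch) Ch ihXj (fun ω => by
      have := hCh _ (hXjI ω); rw [Real.norm_eq_abs] at this; exact abs_le.1 this)
    filter_upwards [this] with ω hω
    rw [Real.norm_eq_abs, abs_le]; exact ⟨hω.1, hω.2⟩
  have hWb : ∀ᵐ ω ∂μ, ‖W ω‖ ≤ 1 := by
    filter_upwards [hWae] with ω hω
    rw [Real.norm_eq_abs, abs_le]; exact ⟨le_trans (by norm_num) hω.1, hω.2⟩
  have iW : Integrable W μ := integrable_condExp
  have iK : Integrable K μ := integrable_condExp
  have hWaesm : AEStronglyMeasurable W μ := (hWsm.mono hm).aestronglyMeasurable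
  have hKaesm : AEStronglyMeasurable K μ := (hKsm.mono hm).aestronglyMeasurable
  have iD : Integrable (fun ω => Xj ω - W ω) μ := iXj.sub iW
  set EX : ℝ := ∫ ω', Xj ω' ∂μ with hEXdef
  -- κ = ∫ h(Xj) * D
  have hYfun : Y = (fun ω => h (Xj ω)) + G + ε := funext fun ω => hYdef ω
  have hcondY : ∀ᵐ ω ∂μ, (μ[Y|m]) ω = K ω + G ω := by
    have h1 : μ[Y|m] =ᵐ[μ] μ[(fun ω => h (Xj ω)) + G|m] + μ[ε|m] := by
      rw [hYfun]; exact condExp_add (ihXj.add hGint) hεint m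
    have h2 : μ[(fun ω => h (Xj ω)) + G|m] =ᵐ[μ] K + μ[G|m] := condExp_add ihXj hGint m
    have h3 : μ[G|m] = G := condExp_of_stronglyMeasurable hm hG hGint
    have h4 : μ[ε|m] =ᵐ[μ] fun _ => (0:ℝ) := by
      have h5 := condExp_indep_eq hε.comap_le hm
        (Measurable.stronglyMeasurable (measurable_iff_comap_le.2 le_rfl)) hIεm
      rw [show (μ[ε] : ℝ) = 0 from hεmean] at h5
      exact h5
    filter_upwards [h1, h2, h4] with ω e1 e2 e4
    rw [e1, Pi.add_apply, e2, Pi.add_apply, e4, h3, add_zero]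
  have hYsub : ∀ᵐ ω ∂μ, Y ω - (μ[Y|m]) ω = (h (Xj ω) - K ω) + ε ω := by
    filter_upwards [hcondY] with ω e
    rw [hYdef ω, e]; ring
  have ihK : ∀ᵐ ω ∂μ, ‖h (Xj ω) - K ω‖ ≤ Ch + Ch := by
    filter_upwards [hKb] with ω hω
    exact (norm_sub_le _ _).trans (add_le_add (hCh _ (hXjI ω)) hω)
  have hhKaesm : AEStronglyMeasurable (fun ω => h (Xj ω) - K ω) μ :=
    (hh.comp hXjmeas).aestronglyMeasurable.sub hKaesm
  have iXE : Integrable (fun ω => Xj ω - EX) μ := iXj.sub (integrable_const EX)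
  have iA : Integrable (fun ω => (h (Xj ω) - K ω) * (Xj ω - EX)) μ :=
    iXE.bdd_mul hhKaesm ihK
  have iB : Integrable (fun ω => ε ω * (Xj ω - EX)) μ := by
    have := hεint.bdd_mul iXE.aestronglyMeasurable
      (ae_of_all _ fun ω => (norm_sub_le _ _).trans
        (add_le_add (hXjn ω) (le_refl ‖EX‖)) : ∀ᵐ ω ∂μ, ‖Xj ω - EX‖ ≤ 1 + ‖EX‖)
    simpa [mul_comm] using this
  have hB0 : ∫ ω, ε ω * (Xj ω - EX) ∂μ = 0 := by
    have hind : IndepFun ε (fun ω => Xj ω - EX) μ :=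
      hIεX.comp measurable_id (measurable_id.sub measurable_const)
    have := hind.integral_mul_eq_mul_integral hεint.aestronglyMeasurable iXE.aestronglyMeasurable
    rw [show ∫ ω, ε ω ∂μ = 0 from hεmean] at this
    simpa using this
  have iA1 : Integrable (fun ω => (h (Xj ω) - K ω) * (Xj ω - W ω)) μ :=
    iD.bdd_mul hhKaesm ihK
  have iA2 : Integrable (fun ω => (h (Xj ω) - K ω) * (W ω - EX)) μ :=
    (iW.sub (integrable_const EX)).bdd_mul hhKaesm ihK
  have hA2 : ∫ ω, (h (Xj ω) - K ω) * (W ω - EX) ∂μ = 0 := by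
    have hb : ∀ᵐ ω ∂μ, ‖W ω - EX‖ ≤ 1 + ‖EX‖ := by
      filter_upwards [hWb] with ω hω
      exact (norm_sub_le _ _).trans (add_le_add hω (le_refl _))
    have := pullout (fun ω => W ω - EX) (fun ω => h (Xj ω)) (1 + ‖EX‖)
      (hWsm.sub stronglyMeasurable_const) hb ihXj
    rw [← this]
    exact integral_congr_ae (ae_of_all _ fun ω => mul_comm _ _)
  have ihXD : Integrable (fun ω => h (Xj ω) * (Xj ω - W ω)) μ :=
    iD.bdd_mul (hh.comp hXjmeas).aestronglyMeasurable (ae_of_all _ fun ω => hCh _ (hXjI ω))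
  have iKD : Integrable (fun ω => K ω * (Xj ω - W ω)) μ := iD.bdd_mul hKaesm hKb
  have hKD : ∫ ω, K ω * (Xj ω - W ω) ∂μ = 0 := pullout K Xj Ch hKsm hKb iXj
  have hκ : ∫ ω, (Y ω - (μ[Y|m]) ω) * (Xj ω - EX) ∂μ
      = ∫ ω, h (Xj ω) * (Xj ω - W ω) ∂μ := by
    calc ∫ ω, (Y ω - (μ[Y|m]) ω) * (Xj ω - EX) ∂μ
        = ∫ ω, ((h (Xj ω) - K ω) * (Xj ω - EX) + ε ω * (Xj ω - EX)) ∂μ := by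
          refine integral_congr_ae ?_
          filter_upwards [hYsub] with ω e
          rw [e]; ring
      _ = ∫ ω, (h (Xj ω) - K ω) * (Xj ω - EX) ∂μ + ∫ ω, ε ω * (Xj ω - EX) ∂μ :=
          integral_add iA iB
      _ = ∫ ω, (h (Xj ω) - K ω) * (Xj ω - EX) ∂μ := by rw [hB0, add_zero]
      _ = ∫ ω, ((h (Xj ω) - K ω) * (Xj ω - W ω) + (h (Xj ω) - K ω) * (W ω - EX)) ∂μ := by
          refine integral_congr_ae (ae_of_all _ fun ω => ?_); ring
      _ = ∫ ω, (h (Xj ω) - K ω) * (Xj ω - W ω) ∂μ := by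
          rw [integral_add iA1 iA2, hA2, add_zero]
      _ = ∫ ω, (h (Xj ω) * (Xj ω - W ω) - K ω * (Xj ω - W ω)) ∂μ := by
          refine integral_congr_ae (ae_of_all _ fun ω => ?_); ring
      _ = ∫ ω, h (Xj ω) * (Xj ω - W ω) ∂μ := by
          rw [integral_sub ihXD iKD, hKD, sub_zero]
  -- ∫ D² = ∫ Xj * D
  have iXD : Integrable (fun ω => Xj ω * (Xj ω - W ω)) μ :=
    iD.bdd_mul hXjmeas.aestronglyMeasurable (ae_of_all _ hXjn)
  have iWD : Integrable (fun ω => W ω * (Xj ω - W ω)) μ := iD.bdd_mul hWaesm hWb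
  have hD2 : ∫ ω, (Xj ω - W ω) ^ 2 ∂μ = ∫ ω, Xj ω * (Xj ω - W ω) ∂μ := by
    calc ∫ ω, (Xj ω - W ω) ^ 2 ∂μ
        = ∫ ω, (Xj ω * (Xj ω - W ω) - W ω * (Xj ω - W ω)) ∂μ := by
          refine integral_congr_ae (ae_of_all _ fun ω => ?_); ring
      _ = ∫ ω, Xj ω * (Xj ω - W ω) ∂μ := by
          rw [integral_sub iXD iWD, pullout W Xj 1 hWsm hWb iXj, sub_zero]
  -- the sign and the monotone function g
  obtain ⟨s, hs1, hgmono⟩ : ∃ s : ℝ, (s = 1 ∨ s = -1) ∧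
      MonotoneOn (fun x => s * h x - c * x) (Set.Icc (0:ℝ) 1) := by
    have contg : ∀ s : ℝ, ContinuousOn (fun x => s * h x - c * x) (Set.Icc (0:ℝ) 1) :=
      fun s => (continuousOn_const.mul hcont).sub (continuousOn_const.mul continuousOn_id)
    have hDAt : ∀ x ∈ Set.Ioo (0:ℝ) 1, HasDerivAt h (h' x) x := fun x hx =>
      (hderiv x (Set.Ioo_subset_Icc_self hx)).hasDerivAt (Icc_mem_nhds hx.1 hx.2)
    have hgd : ∀ (s : ℝ), ∀ x ∈ Set.Ioo (0:ℝ) 1,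
        HasDerivAt (fun x => s * h x - c * x) (s * h' x - c) x := by
      intro s x hx
      have := ((hDAt x hx).const_mul s).sub ((hasDerivAt_id x).const_mul c)
      rw [mul_one] at this; exact this
    have build : ∀ s : ℝ, (∀ x ∈ Set.Ioo (0:ℝ) 1, c ≤ s * h' x) →
        MonotoneOn (fun x => s * h x - c * x) (Set.Icc (0:ℝ) 1) := by
      intro s hderpos
      refine monotoneOn_of_deriv_nonneg (convex_Icc 0 1) (contg s) ?_ ?_
      · rw [interior_Icc]
        exact fun x hx => (hgd s x hx).differentiableAt.differentiableWithinAt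
      · rw [interior_Icc]
        intro x hx
        rw [(hgd s x hx).deriv]
        exact sub_nonneg.2 (hderpos x hx)
    rcases hmono with hmon | hant
    · refine ⟨1, Or.inl rfl, build 1 fun x hx => ?_⟩
      have h0 : 0 ≤ h' x := deriv_nonneg_of_monotoneOn hx (hDAt x hx) hmon
      rw [one_mul]
      calc c ≤ |h' x| := hcle x (Set.Ioo_subset_Icc_self hx)
        _ = h' x := abs_of_nonneg h0
    · refine ⟨-1, Or.inr rfl, build (-1) fun x hx => ?_⟩
      have hmon' : MonotoneOn (fun y => -h y) (Set.Icc (0:ℝ) 1) :=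
        fun a ha b hb hab => neg_le_neg (hant ha hb hab)
      have h0 : 0 ≤ -h' x := deriv_nonneg_of_monotoneOn hx (hDAt x hx).neg hmon'
      calc c ≤ |h' x| := hcle x (Set.Ioo_subset_Icc_self hx)
        _ = -h' x := abs_of_nonpos (by linarith)
        _ = -1 * h' x := by ring
  set g : ℝ → ℝ := fun x => s * h x - c * x with hgdef
  have hgmeas : Measurable g := (measurable_const.mul hh).sub (measurable_const.mul measurable_id)
  have contg : ContinuousOn g (Set.Icc (0:ℝ) 1) :=
    (continuousOn_const.mul hcont).sub (continuousOn_const.mul continuousOn_id)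
  obtain ⟨Cg, hCg⟩ := isCompact_Icc.exists_bound_of_continuousOn contg
  have hgWsm : StronglyMeasurable[m] (fun ω => g (W ω)) :=
    (hgmeas.comp hWsm.measurable).stronglyMeasurable
  have hgWb : ∀ᵐ ω ∂μ, ‖g (W ω)‖ ≤ Cg := by filter_upwards [hWae] with ω hω using hCg _ hω
  have igWD : Integrable (fun ω => g (W ω) * (Xj ω - W ω)) μ :=
    iD.bdd_mul (hgWsm.mono hm).aestronglyMeasurable hgWb
  have igXD : Integrable (fun ω => g (Xj ω) * (Xj ω - W ω)) μ :=
    iD.bdd_mul ((hgmeas.comp hXjmeas)).aestronglyMeasurable (ae_of_all _ fun ω => hCg _ (hXjI ω))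
  have idiffD : Integrable (fun ω => (g (Xj ω) - g (W ω)) * (Xj ω - W ω)) μ := by
    have := igXD.sub igWD
    refine this.congr (ae_of_all _ fun ω => ?_)
    simp only [Pi.sub_apply]
    ring
  have hpos : 0 ≤ ∫ ω, (g (Xj ω) - g (W ω)) * (Xj ω - W ω) ∂μ := by
    refine integral_nonneg_of_ae ?_
    filter_upwards [hWae] with ω hω
    rcases le_total (W ω) (Xj ω) with hle | hle
    · exact mul_nonneg (sub_nonneg.2 (hgmono hω (hXjI ω) hle)) (sub_nonneg.2 hle)
    · have := mul_nonneg (sub_nonneg.2 (hgmono (hXjI ω) hω hle)) (sub_nonneg.2 hle)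
      calc (0:ℝ) ≤ (g (W ω) - g (Xj ω)) * (W ω - Xj ω) := this
        _ = (g (Xj ω) - g (W ω)) * (Xj ω - W ω) := by ring
  have hgW0 : ∫ ω, g (W ω) * (Xj ω - W ω) ∂μ = 0 := pullout _ Xj Cg hgWsm hgWb iXj
  have hgX0 : 0 ≤ ∫ ω, g (Xj ω) * (Xj ω - W ω) ∂μ := by
    have e : ∫ ω, g (Xj ω) * (Xj ω - W ω) ∂μ
        = ∫ ω, (g (Xj ω) - g (W ω)) * (Xj ω - W ω) ∂μ
          + ∫ ω, g (W ω) * (Xj ω - W ω) ∂μ := by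
      rw [← integral_add idiffD igWD]
      refine integral_congr_ae (ae_of_all _ fun ω => ?_); ring
    rw [e, hgW0, add_zero]; exact hpos
  have hexpand : ∫ ω, g (Xj ω) * (Xj ω - W ω) ∂μ
      = s * ∫ ω, h (Xj ω) * (Xj ω - W ω) ∂μ - c * ∫ ω, Xj ω * (Xj ω - W ω) ∂μ := by
    rw [← integral_const_mul s, ← integral_const_mul c, ← integral_sub (ihXD.const_mul s) (iXD.const_mul c)]
    refine integral_congr_ae (ae_of_all _ fun ω => ?_); simp only [hgdef]; ring
  -- final chain
  have hfinal : c * ∫ ω, (Xj ω - W ω) ^ 2 ∂μ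
      ≤ s * ∫ ω, (Y ω - (μ[Y|m]) ω) * (Xj ω - EX) ∂μ := by
    rw [hD2, hκ]
    nlinarith [hgX0, hexpand]
  have habs : s * ∫ ω, (Y ω - (μ[Y|m]) ω) * (Xj ω - EX) ∂μ
      ≤ |∫ ω, (Y ω - (μ[Y|m]) ω) * (Xj ω - EX) ∂μ| := by
    rcases hs1 with rfl | rfl
    · rw [one_mul]; exact le_abs_self _
    · rw [neg_one_mul]; exact neg_le_abs _
  exact hfinal.trans habs

/-- **Proposition 1 (signal strength lower bound for monotone additive effects).**
Assume the additive model `Y = h(Xⱼ) + H(X₋ⱼ) + ε` where `h` is monotonic on `[0,1]` with a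
derivative `h'` that is integrable and bounded in absolute value on `[0,1]`,
`E|H(X₋ⱼ)| < ∞`, `ε` is integrable with mean zero and independent of `X`, and the distribution
of `X` has a density.  Then
  `|κⱼ⁽¹⁾| ≥ (inf_{x∈[0,1]} |h'(x)|) · E[Var(Xⱼ | X₋ⱼ)]`,
where `κⱼ⁽¹⁾ = E{[Y − E(Y|X₋ⱼ)][Xⱼ − E Xⱼ]}`. -/
theorem stmt_7
    (Ω : Type) [MeasurableSpace Ω]
    (μ : Measure Ω) [IsProbabilityMeasure μ]
    (p : ℕ) (j : Fin p) (X : Ω → Fin p → ℝ)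
    (hX : Measurable X)
    (hXrange : ∀ ω k, X ω k ∈ Set.Icc (0 : ℝ) 1)
    -- the distribution of the feature vector X has a density
    (hpdf : HasPDF X μ (volume : Measure (Fin p → ℝ)))
    (h : ℝ → ℝ) (h' : ℝ → ℝ) (hh : Measurable h)
    -- h has derivative h' on [0,1]
    (hderiv : ∀ x ∈ Set.Icc (0 : ℝ) 1, HasDerivWithinAt h (h' x) (Set.Icc (0 : ℝ) 1) x)
    -- h is monotonic
    (hmono : MonotoneOn h (Set.Icc (0 : ℝ) 1) ∨ AntitoneOn h (Set.Icc (0 : ℝ) 1))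
    -- h' is integrable and bounded in absolute value on [0,1]
    (hint : IntervalIntegrable h' volume 0 1)
    (M : ℝ) (hM : ∀ x ∈ Set.Icc (0 : ℝ) 1, |h' x| ≤ M)
    (H : ({k : Fin p // k ≠ j} → ℝ) → ℝ) (hH : Measurable H)
    (hHint : Integrable (fun ω => H (fun k => X ω k.1)) μ)
    (ε : Ω → ℝ) (hε : Measurable ε) (hεint : Integrable ε μ)
    (hεmean : ∫ ω, ε ω ∂μ = 0)
    (hεindep : IndepFun ε X μ)
    (Y : Ω → ℝ)
    (hYdef : ∀ ω, Y ω = h (X ω j) + H (fun k => X ω k.1) + ε ω) :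
    sInf ((fun x => |h' x|) '' Set.Icc (0 : ℝ) 1)
        * ∫ ω, (X ω j
            - (μ[fun ω' => X ω' j
                | MeasurableSpace.comap (fun ω (k : {k : Fin p // k ≠ j}) => X ω k.1)
                    inferInstance]) ω) ^ 2 ∂μ ≤
      |∫ ω, (Y ω
          - (μ[Y | MeasurableSpace.comap (fun ω (k : {k : Fin p // k ≠ j}) => X ω k.1)
              inferInstance]) ω)
        * (X ω j - ∫ ω', X ω' j ∂μ) ∂μ| := by
  classical
  have hπ : Measurable (fun (v : Fin p → ℝ) (k : {k : Fin p // k ≠ j}) => v k.1) :=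
    measurable_pi_lambda _ fun k => measurable_pi_apply k.1
  have hZmeas : Measurable (fun ω (k : {k : Fin p // k ≠ j}) => X ω k.1) := hπ.comp hX
  have hm : MeasurableSpace.comap (fun ω (k : {k : Fin p // k ≠ j}) => X ω k.1) inferInstance
      ≤ ‹MeasurableSpace Ω› := hZmeas.comap_le
  have hle : MeasurableSpace.comap (fun ω (k : {k : Fin p // k ≠ j}) => X ω k.1) inferInstance
      ≤ MeasurableSpace.comap X inferInstance := by
    have e : (fun ω (k : {k : Fin p // k ≠ j}) => X ω k.1)
        = (fun (v : Fin p → ℝ) (k : {k : Fin p // k ≠ j}) => v k.1) ∘ X := rfl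
    rw [e, ← MeasurableSpace.comap_comp]
    exact MeasurableSpace.comap_mono hπ.comap_le
  have hIεm : Indep (MeasurableSpace.comap ε inferInstance)
      (MeasurableSpace.comap (fun ω (k : {k : Fin p // k ≠ j}) => X ω k.1) inferInstance) μ :=
    indep_of_indep_of_le_right ((IndepFun_iff_Indep ε X μ).1 hεindep) hle
  have hIεX : IndepFun ε (fun ω => X ω j) μ :=
    hεindep.comp measurable_id (measurable_pi_apply j)
  have hG : StronglyMeasurable[MeasurableSpace.comap
      (fun ω (k : {k : Fin p // k ≠ j}) => X ω k.1) inferInstance]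
      (fun ω => H (fun k => X ω k.1)) :=
    (hH.comp (measurable_iff_comap_le.2 le_rfl)).stronglyMeasurable
  exact aux_stmt7 hm μ (fun ω => X ω j) ((measurable_pi_apply j).comp hX)
    (fun ω => hXrange ω j) h h' hh hderiv hmono _ hG hHint ε hε hεint hεmean hIεm hIεX Y hYdef
end

section
/- In the model of Example 1 with p ≥ 2, define m(x) = 1_{0.3 ≤ x₁ ≤ 0.7} and m̃(x) = 1_{x₁ ≥ 0.3} − 1_{x₂ > 0.7} for x ∈ [0,1]^p. Then m(X) and m̃(X) are both versions of the conditional mean E(Y | X) (in particular m(X) = m̃(X) almost surely), and for the feature X₂: MDA(Y, X₂) = 0 if m is used in the MDA definition, whereas MDA(Y, X₂) = E(1_{X₁ > 0.7} − 1_{X₂° > 0.7})² > 0 if m̃ is used instead, where X₂° denotes the permuted copy of X₂. -/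
open MeasureTheory ProbabilityTheory

lemma ind_abs_le (s : Set ℝ) (x : ℝ) : ‖s.indicator (fun _ => (1:ℝ)) x‖ ≤ 1 := by
  by_cases h : x ∈ s <;> simp [h]

lemma ind_split (t : ℝ) :
    (Set.Icc (0.3 : ℝ) 0.7).indicator (fun _ => (1 : ℝ)) t =
      (Set.Ici (0.3 : ℝ)).indicator (fun _ => (1 : ℝ)) t
        - (Set.Ioi (0.7 : ℝ)).indicator (fun _ => (1 : ℝ)) t := by
  simp only [Set.indicator_apply, Set.mem_Icc, Set.mem_Ici, Set.mem_Ioi]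
  split_ifs <;> simp_all <;> linarith

lemma ibdd {Ω : Type} [MeasurableSpace Ω] {μ : Measure Ω} [IsProbabilityMeasure μ]
    {f : Ω → ℝ} (hf : AEStronglyMeasurable f μ) (C : ℝ) (h : ∀ ω, ‖f ω‖ ≤ C) :
    Integrable f μ :=
  (integrable_const C).mono' hf (Filter.Eventually.of_forall h)

/-- **Proposition 3 (identification issue of the MDA) in the model of Example 1.**
In the model of Example 1 (with `p ≥ 2`), define `m(x) = 1_{0.3 ≤ x₁ ≤ 0.7}` and
`m̃(x) = 1_{x₁ ≥ 0.3} − 1_{x₂ > 0.7}`.  Then `m(X)` and `m̃(X)` are both versions of the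
conditional mean `E(Y | X)` (in particular `m(X) = m̃(X)` almost surely), and for the feature
`X₂`: `MDA(Y, X₂) = 0` when `m` is used, whereas
`MDA(Y, X₂) = E(1_{X₁ > 0.7} − 1_{X₂° > 0.7})² > 0` when `m̃` is used, where `X₂°` is the
permuted copy of `X₂`. -/
theorem stmt_9
    (Ω : Type) [MeasurableSpace Ω]
    (μ : Measure Ω) [IsProbabilityMeasure μ]
    (p : ℕ) (X : Ω → Fin p → ℝ) (hX : Measurable X)
    (j₁ j₂ : Fin p) (hj₁ : (j₁ : ℕ) = 0) (hj₂ : (j₂ : ℕ) = 1)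
    -- (1) X₁ is uniformly distributed on [0,1]
    (h1 : Measure.map (fun ω => X ω j₁) μ = volume.restrict (Set.Icc (0 : ℝ) 1))
    -- (2) conditional on {X₁ ≤ 0.7}, X is uniformly distributed over [0, 0.7]^p
    (h2 : Measure.map X (ProbabilityTheory.cond μ {ω | X ω j₁ ≤ 0.7}) =
      Measure.pi fun _ : Fin p =>
        (ENNReal.ofReal 0.7)⁻¹ • volume.restrict (Set.Icc (0 : ℝ) 0.7))
    -- (3) conditional on {X₁ > 0.7}, all coordinates of X are equal to X₁
    (h3 : ∀ᵐ ω ∂μ, 0.7 < X ω j₁ → ∀ k, X ω k = X ω j₁)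
    -- the model error
    (ε : Ω → ℝ) (hε : Measurable ε)
    (hεint2 : Integrable (fun ω => (ε ω) ^ 2) μ) (hεint : Integrable ε μ)
    (hεmean : ∫ ω, ε ω ∂μ = 0) (hεindep : IndepFun ε X μ)
    -- the response Y = 1_{0.3 ≤ X₁ ≤ 0.7} + ε
    (Y : Ω → ℝ)
    (hYdef : ∀ ω, Y ω =
      (Set.Icc (0.3 : ℝ) 0.7).indicator (fun _ => (1 : ℝ)) (X ω j₁) + ε ω)
    -- the permuted copy X₂° of X₂: independent of (X, Y), same distribution as X₂
    (Xperm : Ω → ℝ) (hXperm : Measurable Xperm)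
    (hXpermDist : IdentDistrib Xperm (fun ω => X ω j₂) μ μ)
    (hXpermIndep : IndepFun Xperm (fun ω => (X ω, Y ω)) μ) :
    -- the two candidate regression functions
    let m : (Fin p → ℝ) → ℝ := fun x =>
      (Set.Icc (0.3 : ℝ) 0.7).indicator (fun _ => (1 : ℝ)) (x j₁);
    let mt : (Fin p → ℝ) → ℝ := fun x =>
      (Set.Ici (0.3 : ℝ)).indicator (fun _ => (1 : ℝ)) (x j₁)
        - (Set.Ioi (0.7 : ℝ)).indicator (fun _ => (1 : ℝ)) (x j₂);
    -- m(X) and m̃(X) are both versions of E(Y | X), and agree almost surely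
    ((μ[Y | MeasurableSpace.comap X inferInstance]) =ᵐ[μ] fun ω => m (X ω)) ∧
    ((μ[Y | MeasurableSpace.comap X inferInstance]) =ᵐ[μ] fun ω => mt (X ω)) ∧
    ((fun ω => m (X ω)) =ᵐ[μ] fun ω => mt (X ω)) ∧
    -- MDA(Y, X₂) = 0 if m is used
    ((∫ ω, (Y ω - m (Function.update (X ω) j₂ (Xperm ω))) ^ 2 ∂μ)
        - ∫ ω, (Y ω - m (X ω)) ^ 2 ∂μ = 0) ∧
    -- MDA(Y, X₂) = E(1_{X₁ > 0.7} − 1_{X₂° > 0.7})² > 0 if m̃ is used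
    ((∫ ω, (Y ω - mt (Function.update (X ω) j₂ (Xperm ω))) ^ 2 ∂μ)
        - ∫ ω, (Y ω - mt (X ω)) ^ 2 ∂μ =
      ∫ ω, ((Set.Ioi (0.7 : ℝ)).indicator (fun _ => (1 : ℝ)) (X ω j₁)
          - (Set.Ioi (0.7 : ℝ)).indicator (fun _ => (1 : ℝ)) (Xperm ω)) ^ 2 ∂μ) ∧
    (0 < ∫ ω, ((Set.Ioi (0.7 : ℝ)).indicator (fun _ => (1 : ℝ)) (X ω j₁)
          - (Set.Ioi (0.7 : ℝ)).indicator (fun _ => (1 : ℝ)) (Xperm ω)) ^ 2 ∂μ) := by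
  intro m mt
  have hm_def : ∀ x, m x = (Set.Icc (0.3 : ℝ) 0.7).indicator (fun _ => (1 : ℝ)) (x j₁) :=
    fun _ => rfl
  have hmt_def : ∀ x, mt x = (Set.Ici (0.3 : ℝ)).indicator (fun _ => (1 : ℝ)) (x j₁)
      - (Set.Ioi (0.7 : ℝ)).indicator (fun _ => (1 : ℝ)) (x j₂) := fun _ => rfl
  have hj12 : j₁ ≠ j₂ := by
    intro h; rw [h, hj₂] at hj₁; exact one_ne_zero hj₁
  have hX1 : Measurable fun ω => X ω j₁ := (measurable_pi_apply j₁).comp hX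
  have hX2 : Measurable fun ω => X ω j₂ := (measurable_pi_apply j₂).comp hX
  have hIoiMeas : Measurable ((Set.Ioi (0.7:ℝ)).indicator (fun _ => (1:ℝ))) :=
    measurable_const.indicator measurableSet_Ioi
  have hmMeas : Measurable m :=
    (measurable_const.indicator measurableSet_Icc).comp (measurable_pi_apply j₁)
  have hmtMeas : Measurable mt :=
    ((measurable_const.indicator measurableSet_Ici).comp (measurable_pi_apply j₁)).sub
      (hIoiMeas.comp (measurable_pi_apply j₂))
  -- distribution of X₁
  have hmap1 : ∀ s : Set ℝ, MeasurableSet s →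
      μ ((fun ω => X ω j₁) ⁻¹' s) = volume (s ∩ Set.Icc (0:ℝ) 1) := by
    intro s hs
    rw [← Measure.map_apply hX1 hs, h1, Measure.restrict_apply hs]
  have hA : μ {ω | X ω j₁ ≤ 0.7} = ENNReal.ofReal 0.7 := by
    have := hmap1 (Set.Iic 0.7) measurableSet_Iic
    have hset : Set.Iic (0.7:ℝ) ∩ Set.Icc 0 1 = Set.Icc (0:ℝ) 0.7 := by
      ext x
      simp only [Set.mem_inter_iff, Set.mem_Iic, Set.mem_Icc]
      constructor
      · rintro ⟨h, h0, _⟩; exact ⟨h0, h⟩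
      · rintro ⟨h0, h⟩; exact ⟨h, h0, by linarith⟩
    rw [hset] at this
    rw [show {ω | X ω j₁ ≤ 0.7} = (fun ω => X ω j₁) ⁻¹' Set.Iic 0.7 from rfl, this,
      Real.volume_Icc]
    norm_num
  have hB : μ ((fun ω => X ω j₁) ⁻¹' Set.Ioi 0.7) = ENNReal.ofReal 0.3 := by
    have := hmap1 (Set.Ioi 0.7) measurableSet_Ioi
    have hset : Set.Ioi (0.7:ℝ) ∩ Set.Icc 0 1 = Set.Ioc (0.7:ℝ) 1 := by
      ext x
      simp only [Set.mem_inter_iff, Set.mem_Ioi, Set.mem_Icc, Set.mem_Ioc]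
      constructor
      · rintro ⟨h, _, h1⟩; exact ⟨h, h1⟩
      · rintro ⟨h, h1⟩; exact ⟨h, by linarith, h1⟩
    rw [hset] at this
    rw [this, Real.volume_Ioc]
    norm_num
  -- a.e. on {X₁ ≤ 0.7}, X₂ ≤ 0.7
  have hAmeas : MeasurableSet {ω | X ω j₁ ≤ 0.7} := hX1 measurableSet_Iic
  have h2' : ∀ᵐ ω ∂μ, X ω j₁ ≤ 0.7 → X ω j₂ ≤ 0.7 := by
    haveI : IsFiniteMeasure ((ENNReal.ofReal 0.7)⁻¹ • volume.restrict (Set.Icc (0:ℝ) 0.7)) := by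
      constructor
      rw [Measure.smul_apply, smul_eq_mul]
      exact ENNReal.mul_lt_top
        (ENNReal.inv_lt_top.mpr (ENNReal.ofReal_pos.mpr (by norm_num)))
        (by rw [Measure.restrict_apply_univ, Real.volume_Icc]; exact ENNReal.ofReal_lt_top)
    have hpi0 : (Measure.pi fun _ : Fin p =>
        (ENNReal.ofReal 0.7)⁻¹ • volume.restrict (Set.Icc (0:ℝ) 0.7))
        (Function.eval j₂ ⁻¹' Set.Ioi 0.7) = 0 := by
      apply Measure.pi_eval_preimage_null
      rw [Measure.smul_apply, Measure.restrict_apply measurableSet_Ioi, smul_eq_mul]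
      have hset : Set.Ioi (0.7:ℝ) ∩ Set.Icc 0 0.7 = ∅ :=
        Set.eq_empty_iff_forall_notMem.mpr fun x hx => by
          simp only [Set.mem_inter_iff, Set.mem_Ioi, Set.mem_Icc] at hx
          linarith [hx.1, hx.2.2]
      rw [hset]
      simp
    have hnull : (ProbabilityTheory.cond μ {ω | X ω j₁ ≤ 0.7})
        (X ⁻¹' (Function.eval j₂ ⁻¹' Set.Ioi 0.7)) = 0 := by
      rw [← Measure.map_apply hX ((measurable_pi_apply j₂) measurableSet_Ioi), h2]
      exact hpi0
    rw [cond_apply hAmeas] at hnull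
    have hmu0 : μ ({ω | X ω j₁ ≤ 0.7} ∩ X ⁻¹' (Function.eval j₂ ⁻¹' Set.Ioi 0.7)) = 0 := by
      rcases mul_eq_zero.mp hnull with h | h
      · exfalso
        rw [hA] at h
        exact (ENNReal.inv_ne_zero.mpr (by simp)) h
      · exact h
    rw [ae_iff]
    refine measure_mono_null ?_ hmu0
    intro ω hω
    simp only [Set.mem_setOf_eq, Classical.not_imp, not_le] at hω
    exact ⟨hω.1, hω.2⟩
  -- the key a.e. equivalence
  have hiff : ∀ᵐ ω ∂μ, (0.7 < X ω j₂ ↔ 0.7 < X ω j₁) := by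
    filter_upwards [h2', h3] with ω hω h3ω
    constructor
    · intro h
      by_contra hc
      exact absurd (hω (not_lt.mp hc)) (not_le.mpr h)
    · intro h
      rw [h3ω h j₂]; exact h
  -- m(X) = mt(X) a.s.
  have hmeq : (fun ω => m (X ω)) =ᵐ[μ] fun ω => mt (X ω) := by
    filter_upwards [hiff] with ω hω
    rw [hm_def, hmt_def, ind_split]
    have : (Set.Ioi (0.7:ℝ)).indicator (fun _ => (1:ℝ)) (X ω j₂)
        = (Set.Ioi (0.7:ℝ)).indicator (fun _ => (1:ℝ)) (X ω j₁) := by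
      by_cases h : 0.7 < X ω j₁
      · rw [Set.indicator_of_mem (Set.mem_Ioi.mpr (hω.mpr h)),
          Set.indicator_of_mem (Set.mem_Ioi.mpr h)]
      · rw [Set.indicator_of_notMem (fun hh => h (hω.mp (Set.mem_Ioi.mp hh))),
          Set.indicator_of_notMem (fun hh => h (Set.mem_Ioi.mp hh))]
    rw [this]
  -- conditional expectation
  have hle : MeasurableSpace.comap X inferInstance ≤ (inferInstance : MeasurableSpace Ω) :=
    hX.comap_le
  have hXmeasC : Measurable[MeasurableSpace.comap X inferInstance] X := fun s hs => ⟨s, hs, rfl⟩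
  have hmXint : Integrable (fun ω => m (X ω)) μ :=
    ibdd (hmMeas.comp hX).aestronglyMeasurable 1 (fun ω => by rw [hm_def]; exact ind_abs_le _ _)
  have hcond1 : (μ[Y | MeasurableSpace.comap X inferInstance]) =ᵐ[μ] fun ω => m (X ω) := by
    have hYeq : Y = (fun ω => m (X ω)) + ε := funext fun ω => by rw [hYdef ω]; rfl
    have hc1 : μ[(fun ω => m (X ω)) | MeasurableSpace.comap X inferInstance]
        = fun ω => m (X ω) :=
      condExp_of_stronglyMeasurable hle (hmMeas.comp hXmeasC).stronglyMeasurable hmXint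
    have hεmeasC : Measurable[MeasurableSpace.comap ε inferInstance] ε :=
      fun s hs => ⟨s, hs, rfl⟩
    have hc2 : μ[ε | MeasurableSpace.comap X inferInstance] =ᵐ[μ] fun _ => ∫ ω, ε ω ∂μ :=
      condExp_indep_eq hε.comap_le hle hεmeasC.stronglyMeasurable
        ((IndepFun_iff_Indep _ _ _).mp hεindep)
    have hadd : μ[Y | MeasurableSpace.comap X inferInstance] =ᵐ[μ]
        μ[(fun ω => m (X ω)) | MeasurableSpace.comap X inferInstance]
          + μ[ε | MeasurableSpace.comap X inferInstance] := by
      rw [hYeq]; exact condExp_add hmXint hεint _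
    filter_upwards [hadd, hc2] with ω h h2c
    rw [h, Pi.add_apply, hc1, h2c, hεmean, add_zero]
  -- facts about the indicator difference D
  have hI1meas : Measurable (fun ω => (Set.Ioi (0.7:ℝ)).indicator (fun _ => (1:ℝ)) (X ω j₁)) :=
    hIoiMeas.comp hX1
  have hIpmeas : Measurable (fun ω => (Set.Ioi (0.7:ℝ)).indicator (fun _ => (1:ℝ)) (Xperm ω)) :=
    hIoiMeas.comp hXperm
  have hDmeas : Measurable (fun ω => (Set.Ioi (0.7:ℝ)).indicator (fun _ => (1:ℝ)) (X ω j₁)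
      - (Set.Ioi (0.7:ℝ)).indicator (fun _ => (1:ℝ)) (Xperm ω)) := hI1meas.sub hIpmeas
  have hD2int : Integrable (fun ω => ((Set.Ioi (0.7:ℝ)).indicator (fun _ => (1:ℝ)) (X ω j₁)
      - (Set.Ioi (0.7:ℝ)).indicator (fun _ => (1:ℝ)) (Xperm ω)) ^ 2) μ := by
    refine ibdd (hDmeas.pow_const 2).aestronglyMeasurable 4 fun ω => ?_
    have ha := abs_le.mp (ind_abs_le (Set.Ioi 0.7) (X ω j₁))
    have hb := abs_le.mp (ind_abs_le (Set.Ioi 0.7) (Xperm ω))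
    rw [Real.norm_eq_abs, abs_of_nonneg (sq_nonneg _)]
    nlinarith [ha.1, ha.2, hb.1, hb.2]
  refine ⟨hcond1, hcond1.trans hmeq, hmeq, ?_, ?_, ?_⟩
  · -- MDA with m is 0
    have : (fun ω => (Y ω - m (Function.update (X ω) j₂ (Xperm ω))) ^ 2)
        = fun ω => (Y ω - m (X ω)) ^ 2 := by
      funext ω
      rw [hm_def, hm_def, Function.update_of_ne hj12]
    rw [this, sub_self]
  · -- MDA with mt
    have key1 : (fun ω => (Y ω - mt (Function.update (X ω) j₂ (Xperm ω))) ^ 2)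
        = fun ω => (ε ω - ((Set.Ioi (0.7:ℝ)).indicator (fun _ => (1:ℝ)) (X ω j₁)
            - (Set.Ioi (0.7:ℝ)).indicator (fun _ => (1:ℝ)) (Xperm ω))) ^ 2 := by
      funext ω
      rw [hmt_def, Function.update_of_ne hj12, Function.update_self, hYdef ω, ind_split]
      ring
    have key2 : ∫ ω, (Y ω - mt (X ω)) ^ 2 ∂μ = ∫ ω, ε ω ^ 2 ∂μ := by
      apply integral_congr_ae
      filter_upwards [hmeq] with ω h
      rw [hYdef ω, ← hm_def, h]
      ring
    rw [key1, key2]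
    -- integrability of products
    have hg1 : Integrable (fun ω =>
        (Set.Ioi (0.7:ℝ)).indicator (fun _ => (1:ℝ)) (X ω j₁) * ε ω) μ :=
      hεint.bdd_mul hI1meas.aestronglyMeasurable (Filter.Eventually.of_forall fun ω => ind_abs_le _ _)
    have hg2 : Integrable (fun ω =>
        (Set.Ioi (0.7:ℝ)).indicator (fun _ => (1:ℝ)) (Xperm ω) * ε ω) μ :=
      hεint.bdd_mul hIpmeas.aestronglyMeasurable (Filter.Eventually.of_forall fun ω => ind_abs_le _ _)
    -- the cross terms vanish
    have hind1 : IndepFun (fun ω => (Set.Ioi (0.7:ℝ)).indicator (fun _ => (1:ℝ)) (X ω j₁)) ε μ :=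
      (hεindep.comp measurable_id (hIoiMeas.comp (measurable_pi_apply j₁))).symm
    have hcross1 : ∫ ω, (Set.Ioi (0.7:ℝ)).indicator (fun _ => (1:ℝ)) (X ω j₁) * ε ω ∂μ = 0 := by
      have h0 := hind1.integral_mul_eq_mul_integral hI1meas.aestronglyMeasurable hε.aestronglyMeasurable
      rw [show (∫ ω, (Set.Ioi (0.7:ℝ)).indicator (fun _ => (1:ℝ)) (X ω j₁) * ε ω ∂μ)
          = integral μ ((fun ω => (Set.Ioi (0.7:ℝ)).indicator (fun _ => (1:ℝ)) (X ω j₁)) * ε)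
          from integral_congr_ae (Filter.Eventually.of_forall fun ω => rfl), h0, hεmean,
        mul_zero]
    have hεY : (fun ω => Y ω - m (X ω)) = ε := funext fun ω => by
      rw [hYdef ω, ← hm_def]; ring
    have hindp0 : IndepFun Xperm (fun ω => Y ω - m (X ω)) μ :=
      hXpermIndep.comp measurable_id (measurable_snd.sub (hmMeas.comp measurable_fst))
    rw [hεY] at hindp0
    have hind2 : IndepFun (fun ω => (Set.Ioi (0.7:ℝ)).indicator (fun _ => (1:ℝ)) (Xperm ω)) ε μ :=
      hindp0.comp hIoiMeas measurable_id
    have hcross2 : ∫ ω, (Set.Ioi (0.7:ℝ)).indicator (fun _ => (1:ℝ)) (Xperm ω) * ε ω ∂μ = 0 := by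
      have h0 := hind2.integral_mul_eq_mul_integral hIpmeas.aestronglyMeasurable hε.aestronglyMeasurable
      rw [show (∫ ω, (Set.Ioi (0.7:ℝ)).indicator (fun _ => (1:ℝ)) (Xperm ω) * ε ω ∂μ)
          = integral μ ((fun ω => (Set.Ioi (0.7:ℝ)).indicator (fun _ => (1:ℝ)) (Xperm ω)) * ε)
          from integral_congr_ae (Filter.Eventually.of_forall fun ω => rfl), h0, hεmean,
        mul_zero]
    -- expand the square
    have hsplit : (fun ω => (ε ω - ((Set.Ioi (0.7:ℝ)).indicator (fun _ => (1:ℝ)) (X ω j₁)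
          - (Set.Ioi (0.7:ℝ)).indicator (fun _ => (1:ℝ)) (Xperm ω))) ^ 2)
        = fun ω => (ε ω ^ 2
            - 2 * ((Set.Ioi (0.7:ℝ)).indicator (fun _ => (1:ℝ)) (X ω j₁) * ε ω
              - (Set.Ioi (0.7:ℝ)).indicator (fun _ => (1:ℝ)) (Xperm ω) * ε ω))
            + ((Set.Ioi (0.7:ℝ)).indicator (fun _ => (1:ℝ)) (X ω j₁)
              - (Set.Ioi (0.7:ℝ)).indicator (fun _ => (1:ℝ)) (Xperm ω)) ^ 2 := by
      funext ω; ring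
    have hgd : Integrable (fun ω =>
        2 * ((Set.Ioi (0.7:ℝ)).indicator (fun _ => (1:ℝ)) (X ω j₁) * ε ω
          - (Set.Ioi (0.7:ℝ)).indicator (fun _ => (1:ℝ)) (Xperm ω) * ε ω)) μ :=
      (hg1.sub hg2).const_mul 2
    have hfirst : Integrable (fun ω => ε ω ^ 2
        - 2 * ((Set.Ioi (0.7:ℝ)).indicator (fun _ => (1:ℝ)) (X ω j₁) * ε ω
          - (Set.Ioi (0.7:ℝ)).indicator (fun _ => (1:ℝ)) (Xperm ω) * ε ω)) μ :=
      hεint2.sub hgd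
    rw [hsplit, integral_add hfirst hD2int, integral_sub hεint2 hgd, integral_const_mul,
      integral_sub hg1 hg2, hcross1, hcross2]
    ring
  · -- positivity
    have hSmeas1 : MeasurableSet ((fun ω => X ω j₁) ⁻¹' Set.Ioi 0.7) := hX1 measurableSet_Ioi
    have hSmeas2 : MeasurableSet (Xperm ⁻¹' Set.Iic 0.7) := hXperm measurableSet_Iic
    have hSmeas : MeasurableSet
        ((fun ω => X ω j₁) ⁻¹' Set.Ioi 0.7 ∩ Xperm ⁻¹' Set.Iic 0.7) := hSmeas1.inter hSmeas2
    -- independence of X₁ and Xperm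
    have hindXp : IndepFun (fun ω => X ω j₁) Xperm μ :=
      (hXpermIndep.comp measurable_id ((measurable_pi_apply j₁).comp measurable_fst)).symm
    have hμperm : μ (Xperm ⁻¹' Set.Iic 0.7) = ENNReal.ofReal 0.7 := by
      have hmapeq := hXpermDist.map_eq
      have e1 : μ (Xperm ⁻¹' Set.Iic 0.7) = μ ((fun ω => X ω j₂) ⁻¹' Set.Iic 0.7) := by
        rw [← Measure.map_apply hXperm measurableSet_Iic, hmapeq,
          Measure.map_apply hX2 measurableSet_Iic]
      have e2 : μ ((fun ω => X ω j₂) ⁻¹' Set.Iic 0.7) = μ {ω | X ω j₁ ≤ 0.7} := by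
        apply measure_congr
        rw [Filter.eventuallyEq_set]
        filter_upwards [hiff] with ω hω
        simp only [Set.mem_preimage, Set.mem_Iic, Set.mem_setOf_eq]
        rw [← not_lt, ← not_lt, hω]
      rw [e1, e2, hA]
    have hSval : μ ((fun ω => X ω j₁) ⁻¹' Set.Ioi 0.7 ∩ Xperm ⁻¹' Set.Iic 0.7)
        = ENNReal.ofReal 0.3 * ENNReal.ofReal 0.7 := by
      rw [(indepFun_iff_measure_inter_preimage_eq_mul.mp hindXp) _ _
        measurableSet_Ioi measurableSet_Iic, hB, hμperm]
    have htr : (μ ((fun ω => X ω j₁) ⁻¹' Set.Ioi 0.7 ∩ Xperm ⁻¹' Set.Iic 0.7)).toReal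
        = 0.21 := by
      rw [hSval, ENNReal.toReal_mul, ENNReal.toReal_ofReal (by norm_num),
        ENNReal.toReal_ofReal (by norm_num)]
      norm_num
    have hlow : ∫ ω in (fun ω => X ω j₁) ⁻¹' Set.Ioi 0.7 ∩ Xperm ⁻¹' Set.Iic 0.7,
        ((Set.Ioi (0.7:ℝ)).indicator (fun _ => (1:ℝ)) (X ω j₁)
          - (Set.Ioi (0.7:ℝ)).indicator (fun _ => (1:ℝ)) (Xperm ω)) ^ 2 ∂μ
        = (μ ((fun ω => X ω j₁) ⁻¹' Set.Ioi 0.7 ∩ Xperm ⁻¹' Set.Iic 0.7)).toReal := by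
      rw [setIntegral_congr_fun hSmeas (g := fun _ => (1:ℝ)) ?_, setIntegral_const,
        smul_eq_mul, mul_one, measureReal_def]
      intro ω hω
      obtain ⟨h1, h2⟩ := hω
      have hmem1 : X ω j₁ ∈ Set.Ioi (0.7:ℝ) := h1
      have hmem2 : Xperm ω ∉ Set.Ioi (0.7:ℝ) := by
        have : Xperm ω ≤ 0.7 := h2
        simpa using not_lt.mpr this
      have hx1 : (Set.Ioi (0.7:ℝ)).indicator (fun _ => (1:ℝ)) (X ω j₁) = 1 :=
        Set.indicator_of_mem hmem1 _
      have hx2 : (Set.Ioi (0.7:ℝ)).indicator (fun _ => (1:ℝ)) (Xperm ω) = 0 :=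
        Set.indicator_of_notMem hmem2 _
      simp [hx1, hx2]
    have hles : ∫ ω in (fun ω => X ω j₁) ⁻¹' Set.Ioi 0.7 ∩ Xperm ⁻¹' Set.Iic 0.7,
        ((Set.Ioi (0.7:ℝ)).indicator (fun _ => (1:ℝ)) (X ω j₁)
          - (Set.Ioi (0.7:ℝ)).indicator (fun _ => (1:ℝ)) (Xperm ω)) ^ 2 ∂μ
        ≤ ∫ ω, ((Set.Ioi (0.7:ℝ)).indicator (fun _ => (1:ℝ)) (X ω j₁)
          - (Set.Ioi (0.7:ℝ)).indicator (fun _ => (1:ℝ)) (Xperm ω)) ^ 2 ∂μ :=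
      setIntegral_le_integral hD2int (Filter.Eventually.of_forall fun ω => sq_nonneg _)
    rw [hlow, htr] at hles
    linarith
end

section
/- For any square-integrable response Y and feature vector X = (X₁, …, X_p) such that Xⱼ is a null feature (i.e. Xⱼ is conditionally independent of Y given X₋ⱼ), the conditional permutation importance is exactly zero: CPI(Y, Xⱼ) = 0. In particular, m(X_{(j)}†) = m(X) almost surely in that case. -/
open MeasureTheory ProbabilityTheory

section Aux

variable {α Ω : Type*} [MeasurableSpace α] {m' : MeasurableSpace Ω} [mΩ : MeasurableSpace Ω]
  {μ : Measure Ω} [IsFiniteMeasure μ] {Y : Ω → α}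

omit [IsFiniteMeasure μ] in
lemma CPIaux.comp_L1_integrable (hY : Measurable Y) (f : α →₁[μ.map Y] ℝ) :
    Integrable (fun ω => f (Y ω)) μ := by
  have h := L1.integrable_coeFn f
  rw [integrable_map_measure (Lp.aestronglyMeasurable f) hY.aemeasurable] at h
  exact h

omit [IsFiniteMeasure μ] in
lemma CPIaux.comp_L1_norm (hY : Measurable Y) (f : α →₁[μ.map Y] ℝ) :
    ∫ ω, |f (Y ω)| ∂μ = ‖f‖ := by
  rw [L1.norm_eq_integral_norm, integral_map hY.aemeasurable (Lp.aestronglyMeasurable f).norm]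
  simp [Real.norm_eq_abs]

omit [IsFiniteMeasure μ] in
lemma CPIaux.setIntegral_comp_L1_bound (hY : Measurable Y) (f : α →₁[μ.map Y] ℝ) (S : Set Ω) :
    |∫ ω in S, f (Y ω) ∂μ| ≤ ‖f‖ := by
  have h1 : |∫ ω in S, f (Y ω) ∂μ| ≤ ∫ ω in S, |f (Y ω)| ∂μ := by
    have h := norm_integral_le_integral_norm (μ := μ.restrict S) (fun ω => f (Y ω))
    simp only [Real.norm_eq_abs] at h
    exact h
  refine h1.trans ?_
  rw [← CPIaux.comp_L1_norm hY f]
  exact setIntegral_le_integral (CPIaux.comp_L1_integrable hY f).abs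
    (Filter.Eventually.of_forall fun ω => abs_nonneg _)

lemma CPIaux.closed_aux (hY : Measurable Y) (hm' : m' ≤ mΩ)
    {W : Ω → ℝ} (hW : ∀ᵐ ω ∂μ, |W ω| ≤ 1) (hWm : AEStronglyMeasurable W μ)
    (S₁ S₂ : Set Ω) :
    IsClosed {f : α →₁[μ.map Y] ℝ |
      ∫ ω in S₁, f (Y ω) ∂μ = ∫ ω in S₂, W ω * (μ[fun ω' => f (Y ω')|m']) ω ∂μ} := by
  have hcomp : ∀ f : α →₁[μ.map Y] ℝ, Integrable (fun ω => f (Y ω)) μ :=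
    CPIaux.comp_L1_integrable hY
  have hprod : ∀ g : Ω → ℝ, Integrable (fun ω => W ω * (μ[g|m']) ω) μ := by
    intro g
    refine Integrable.mono' (g := fun ω => |(μ[g|m']) ω|) integrable_condExp.abs
      (hWm.mul (stronglyMeasurable_condExp.mono hm').aestronglyMeasurable) ?_
    filter_upwards [hW] with ω hω
    rw [Real.norm_eq_abs, abs_mul]
    exact mul_le_of_le_one_left (abs_nonneg _) hω
  have hbound2 : ∀ g : Ω → ℝ, Integrable g μ →
      |∫ ω in S₂, W ω * (μ[g|m']) ω ∂μ| ≤ ∫ ω, |g ω| ∂μ := by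
    intro g hg
    have h1 : |∫ ω in S₂, W ω * (μ[g|m']) ω ∂μ| ≤ ∫ ω in S₂, |W ω * (μ[g|m']) ω| ∂μ := by
      have h := norm_integral_le_integral_norm (μ := μ.restrict S₂) (fun ω => W ω * (μ[g|m']) ω)
      simp only [Real.norm_eq_abs] at h
      exact h
    refine h1.trans ?_
    have h2 : ∫ ω in S₂, |W ω * (μ[g|m']) ω| ∂μ ≤ ∫ ω, |W ω * (μ[g|m']) ω| ∂μ :=
      setIntegral_le_integral (hprod g).abs (Filter.Eventually.of_forall fun ω => abs_nonneg _)
    refine h2.trans ?_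
    have h3 : ∫ ω, |W ω * (μ[g|m']) ω| ∂μ ≤ ∫ ω, |(μ[g|m']) ω| ∂μ := by
      refine integral_mono_ae (hprod g).abs integrable_condExp.abs ?_
      filter_upwards [hW] with ω hω
      rw [abs_mul]
      exact mul_le_of_le_one_left (abs_nonneg _) hω
    exact h3.trans (integral_abs_condExp_le g)
  have hF1 : LipschitzWith 1 fun f : α →₁[μ.map Y] ℝ => ∫ ω in S₁, f (Y ω) ∂μ := by
    refine LipschitzWith.of_dist_le_mul fun f g => ?_
    rw [Real.dist_eq, NNReal.coe_one, one_mul, dist_eq_norm]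
    have hsub : (fun ω => f (Y ω) - g (Y ω)) =ᵐ[μ] fun ω => (f - g) (Y ω) := by
      have h1 : ∀ᵐ y ∂(μ.map Y), (f - g) y = f y - g y := Lp.coeFn_sub f g
      filter_upwards [ae_of_ae_map hY.aemeasurable h1] with ω hω using hω.symm
    have : ∫ ω in S₁, f (Y ω) ∂μ - ∫ ω in S₁, g (Y ω) ∂μ = ∫ ω in S₁, (f - g) (Y ω) ∂μ := by
      rw [← integral_sub (hcomp f).integrableOn (hcomp g).integrableOn]
      exact integral_congr_ae (ae_restrict_of_ae hsub)
    rw [this]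
    exact CPIaux.setIntegral_comp_L1_bound hY (f - g) S₁
  have hF2 : LipschitzWith 1
      fun f : α →₁[μ.map Y] ℝ => ∫ ω in S₂, W ω * (μ[fun ω' => f (Y ω')|m']) ω ∂μ := by
    refine LipschitzWith.of_dist_le_mul fun f g => ?_
    rw [Real.dist_eq, NNReal.coe_one, one_mul, dist_eq_norm]
    have hsub : (fun ω => f (Y ω) - g (Y ω)) =ᵐ[μ] fun ω => (f - g) (Y ω) := by
      have h1 : ∀ᵐ y ∂(μ.map Y), (f - g) y = f y - g y := Lp.coeFn_sub f g
      filter_upwards [ae_of_ae_map hY.aemeasurable h1] with ω hω using hω.symm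
    have hce : (fun ω => (μ[fun ω' => f (Y ω')|m']) ω - (μ[fun ω' => g (Y ω')|m']) ω)
        =ᵐ[μ] μ[fun ω' => (f - g) (Y ω')|m'] := by
      have h2 := condExp_sub (m := m') (μ := μ) (hcomp f) (hcomp g)
      have h3 := condExp_congr_ae (m := m') (μ := μ) hsub
      have h23 : (μ[fun ω => f (Y ω) - g (Y ω)|m'])
          = μ[(fun ω => f (Y ω)) - fun ω => g (Y ω)|m'] := rfl
      filter_upwards [h2, h3] with ω h2ω h3ω
      rw [← h3ω, h23, h2ω]
      simp
    have : (∫ ω in S₂, W ω * (μ[fun ω' => f (Y ω')|m']) ω ∂μ)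
        - ∫ ω in S₂, W ω * (μ[fun ω' => g (Y ω')|m']) ω ∂μ
        = ∫ ω in S₂, W ω * (μ[fun ω' => (f - g) (Y ω')|m']) ω ∂μ := by
      rw [← integral_sub (hprod _).integrableOn (hprod _).integrableOn]
      refine integral_congr_ae (ae_restrict_of_ae ?_)
      filter_upwards [hce] with ω hω
      rw [← mul_sub, hω]
    rw [this]
    refine (hbound2 _ (hcomp (f - g))).trans ?_
    rw [CPIaux.comp_L1_norm hY (f - g)]
  exact isClosed_eq hF1.continuous hF2.continuous

end Aux

/-- **Proposition 4 (CPI vanishes on null features).**  For any square-integrable response `Y`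
and feature vector `X` such that `Xⱼ` is a null feature (conditionally independent of `Y` given
`X₋ⱼ`), the conditional permutation importance is exactly zero:
`CPI(Y, Xⱼ) = E(Y − m(X_{(j)}†))² − E(Y − m(X))² = 0`;  in particular
`m(X_{(j)}†) = m(X)` almost surely.  Here `m` is a version of `E(Y | X)` and, given `X₋ⱼ`, the
permuted feature `Xⱼ†` has the same conditional distribution as `Xⱼ` and is conditionally
independent of both `Y` and `Xⱼ`. -/
theorem stmt_10
    (Ω : Type) [MeasurableSpace Ω] [StandardBorelSpace Ω] [Nonempty Ω]
    (μ : Measure Ω) [IsProbabilityMeasure μ]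
    (p : ℕ) (j : Fin p) (X : Ω → Fin p → ℝ) (Y : Ω → ℝ)
    (hX : Measurable X) (hY : Measurable Y)
    (hXrange : ∀ ω k, X ω k ∈ Set.Icc (0 : ℝ) 1)
    (hY2 : Integrable (fun ω => (Y ω) ^ 2) μ)
    (hXmj : Measurable (fun ω (k : {k : Fin p // k ≠ j}) => X ω k.1))
    -- Xⱼ is a null feature
    (hnull : CondIndepFun
      (MeasurableSpace.comap (fun ω (k : {k : Fin p // k ≠ j}) => X ω k.1) inferInstance)
      hXmj.comap_le (fun ω => X ω j) Y μ)
    -- m is a version of the conditional mean E(Y | X)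
    (m : (Fin p → ℝ) → ℝ) (hm : Measurable m)
    (hver : (μ[Y | MeasurableSpace.comap X inferInstance]) =ᵐ[μ] fun ω => m (X ω))
    -- the conditionally permuted feature Xⱼ†
    (Xdag : Ω → ℝ) (hXdag : Measurable Xdag)
    -- given X₋ⱼ, Xⱼ† has the same conditional distribution as Xⱼ
    (hdist : ∀ᵐ v ∂(Measure.map (fun ω (k : {k : Fin p // k ≠ j}) => X ω k.1) μ),
      condDistrib Xdag (fun ω (k : {k : Fin p // k ≠ j}) => X ω k.1) μ v =
        condDistrib (fun ω => X ω j) (fun ω (k : {k : Fin p // k ≠ j}) => X ω k.1) μ v)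
    -- given X₋ⱼ, Xⱼ† is conditionally independent of both Y and Xⱼ
    (hcind : CondIndepFun
      (MeasurableSpace.comap (fun ω (k : {k : Fin p // k ≠ j}) => X ω k.1) inferInstance)
      hXmj.comap_le Xdag (fun ω => (Y ω, X ω j)) μ) :
    ((∫ ω, (Y ω - m (Function.update (X ω) j (Xdag ω))) ^ 2 ∂μ)
        - ∫ ω, (Y ω - m (X ω)) ^ 2 ∂μ = 0) ∧
      ((fun ω => m (Function.update (X ω) j (Xdag ω))) =ᵐ[μ] fun ω => m (X ω)) := by
  classical
  set Z : Ω → ({k : Fin p // k ≠ j} → ℝ) := fun ω (k : {k : Fin p // k ≠ j}) => X ω k.1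
    with hZdef
  have hZ : Measurable Z := hXmj
  have hXj : Measurable fun ω => X ω j := (measurable_pi_apply j).comp hX
  have hYint : Integrable Y μ :=
    ((memLp_two_iff_integrable_sq hY.aestronglyMeasurable).mpr hY2).integrable one_le_two
  have hGle : MeasurableSpace.comap Z inferInstance ≤ _ := hZ.comap_le
  have hXle : MeasurableSpace.comap X inferInstance ≤ _ := hX.comap_le
  -- restriction map
  set r : (Fin p → ℝ) → ({k : Fin p // k ≠ j} → ℝ) := fun v k => v k.1 with hrdef
  have hr : Measurable r := measurable_pi_lambda _ fun k => measurable_pi_apply k.1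
  have hGleX : MeasurableSpace.comap Z inferInstance ≤ MeasurableSpace.comap X inferInstance := by
    rintro A ⟨t, ht, rfl⟩
    exact ⟨r ⁻¹' t, hr ht, rfl⟩
  -- Step K : product rule for indicators from conditional independence
  have hK := (condIndepFun_iff_condExp_inter_preimage_eq_mul
      (m' := MeasurableSpace.comap Z inferInstance) (hm' := hGle) (μ := μ) hXj hY).mp hnull
  -- the π-system generating the comap of X
  set C : Set (Set Ω) := {A | ∃ t : Set ({k : Fin p // k ≠ j} → ℝ), MeasurableSet t ∧
      ∃ s : Set ℝ, MeasurableSet s ∧ A = Z ⁻¹' t ∩ (fun ω => X ω j) ⁻¹' s} with hCdef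
  have hCpi : IsPiSystem C := by
    rintro A ⟨t1, ht1, s1, hs1, rfl⟩ B ⟨t2, ht2, s2, hs2, rfl⟩ -
    refine ⟨t1 ∩ t2, ht1.inter ht2, s1 ∩ s2, hs1.inter hs2, ?_⟩
    ext ω
    simp only [Set.mem_inter_iff, Set.mem_preimage]
    tauto
  have hmXeq : MeasurableSpace.comap X inferInstance = MeasurableSpace.generateFrom C := by
    refine le_antisymm ?_ (MeasurableSpace.generateFrom_le ?_)
    · have hXC : @Measurable Ω (Fin p → ℝ) (MeasurableSpace.generateFrom C)
          MeasurableSpace.pi X := by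
        refine (@measurable_pi_iff Ω (Fin p) (fun _ => ℝ)
          (MeasurableSpace.generateFrom C) _ X).mpr fun k => ?_
        by_cases hk : k = j
        · subst hk
          intro s hs
          exact MeasurableSpace.measurableSet_generateFrom
            ⟨Set.univ, MeasurableSet.univ, s, hs, by simp⟩
        · intro s hs
          refine MeasurableSpace.measurableSet_generateFrom
            ⟨{v | v ⟨k, hk⟩ ∈ s}, measurable_pi_apply _ hs, Set.univ, MeasurableSet.univ, ?_⟩
          ext ω
          simp [Z]
      rintro A ⟨sA, hsA, rfl⟩
      exact hXC hsA
    · rintro A ⟨t, ht, s, hs, rfl⟩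
      exact ⟨r ⁻¹' t ∩ (fun v => v j) ⁻¹' s, (hr ht).inter (measurable_pi_apply j hs), rfl⟩
  -- Step A : conditional expectations agree
  have haveA : μ[Y|MeasurableSpace.comap X inferInstance]
      =ᵐ[μ] μ[Y|MeasurableSpace.comap Z inferInstance] := by
    have hintV : Integrable (μ[Y|MeasurableSpace.comap Z inferInstance]) μ := integrable_condExp
    -- the basic integral identity on the π-system
    have hbasic : ∀ t : Set ({k : Fin p // k ≠ j} → ℝ), MeasurableSet t →
        ∀ s : Set ℝ, MeasurableSet s →
        ∫ ω in Z ⁻¹' t ∩ (fun ω => X ω j) ⁻¹' s,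
            (μ[Y|MeasurableSpace.comap Z inferInstance]) ω ∂μ
          = ∫ ω in Z ⁻¹' t ∩ (fun ω => X ω j) ⁻¹' s, Y ω ∂μ := by
      intro t ht s hs
      set G : Set Ω := Z ⁻¹' t with hGdef
      set B : Set Ω := (fun ω => X ω j) ⁻¹' s with hBdef
      have hGm : MeasurableSet[MeasurableSpace.comap Z inferInstance] G := ⟨t, ht, rfl⟩
      have hG : MeasurableSet G := hGle _ hGm
      have hB : MeasurableSet B := hXj hs
      set W : Ω → ℝ :=
        μ[Set.indicator B fun _ => (1:ℝ)|MeasurableSpace.comap Z inferInstance] with hWdef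
      have hWm : AEStronglyMeasurable W μ :=
        (stronglyMeasurable_condExp.mono hGle).aestronglyMeasurable
      have hBint : Integrable (Set.indicator B fun _ => (1:ℝ)) μ :=
        (integrable_const 1).indicator hB
      have hWnn : 0 ≤ᵐ[μ] W :=
        condExp_nonneg (Filter.Eventually.of_forall fun ω =>
          Set.indicator_nonneg (fun _ _ => zero_le_one) ω)
      have hWle1 : W ≤ᵐ[μ] fun _ => (1:ℝ) := by
        have h1 : W ≤ᵐ[μ] μ[fun _ => (1:ℝ)|MeasurableSpace.comap Z inferInstance] :=
          condExp_mono hBint (integrable_const 1)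
            (Filter.Eventually.of_forall fun ω => by
              by_cases hω : ω ∈ B <;>
                simp [Set.indicator_of_mem, Set.indicator_of_notMem, hω])
        have h2 : μ[fun _ => (1:ℝ)|MeasurableSpace.comap Z inferInstance] = fun _ => (1:ℝ) :=
          condExp_const hGle 1
        rw [h2] at h1
        exact h1
      have hWabs : ∀ᵐ ω ∂μ, |W ω| ≤ 1 := by
        filter_upwards [hWnn, hWle1] with ω h1 h2
        have h1' : (0:ℝ) ≤ W ω := h1
        have h2' : W ω ≤ 1 := h2
        rw [abs_le]
        constructor <;> linarith
      -- integrability of products with W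
      have hWprod : ∀ g : Ω → ℝ,
          Integrable (fun ω => W ω *
            (μ[g|MeasurableSpace.comap Z inferInstance]) ω) μ := by
        intro g
        refine Integrable.mono'
          (g := fun ω => |(μ[g|MeasurableSpace.comap Z inferInstance]) ω|)
          integrable_condExp.abs
          (hWm.mul (stronglyMeasurable_condExp.mono hGle).aestronglyMeasurable) ?_
        filter_upwards [hWabs] with ω hω
        rw [Real.norm_eq_abs, abs_mul]
        exact mul_le_of_le_one_left (abs_nonneg _) hω
      -- measure of G ∩ D via conditional expectation
      have hmGD : ∀ D : Set Ω, MeasurableSet D → (μ (G ∩ D)).toReal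
          = ∫ ω in G,
              (μ[Set.indicator D fun _ => (1:ℝ)|MeasurableSpace.comap Z inferInstance]) ω ∂μ := by
        intro D hD
        rw [setIntegral_condExp hGle ((integrable_const (1:ℝ)).indicator hD) hGm,
          setIntegral_indicator hD, setIntegral_const]
        simp [Measure.real]
      -- the key numeric identity, by L¹ induction
      have hP : ∀ ⦃φ : ℝ → ℝ⦄, Integrable φ (μ.map Y) →
          ∫ ω in G ∩ B, φ (Y ω) ∂μ
            = ∫ ω in G, W ω *
                (μ[fun ω' => φ (Y ω')|MeasurableSpace.comap Z inferInstance]) ω ∂μ := by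
        refine Integrable.induction (μ := μ.map Y) (P := fun φ : ℝ → ℝ =>
          ∫ ω in G ∩ B, φ (Y ω) ∂μ
            = ∫ ω in G, W ω *
                (μ[fun ω' => φ (Y ω')|MeasurableSpace.comap Z inferInstance]) ω ∂μ)
          ?_ ?_ ?_ ?_
        · -- indicator functions
          intro c u hu _
          have hYu : MeasurableSet (Y ⁻¹' u) := hY hu
          have hcompind : (fun ω => (Set.indicator u fun _ => c) (Y ω))
              = fun ω => c • Set.indicator (Y ⁻¹' u) (fun _ => (1:ℝ)) ω := by
            funext ω
            by_cases h : Y ω ∈ u <;>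
              simp [Set.indicator_of_mem, Set.indicator_of_notMem, h]
          have hce : μ[fun ω' => (Set.indicator u fun _ => c) (Y ω')|
                MeasurableSpace.comap Z inferInstance]
              =ᵐ[μ] fun ω => c • (μ[Set.indicator (Y ⁻¹' u) fun _ => (1:ℝ)|
                MeasurableSpace.comap Z inferInstance]) ω := by
            rw [hcompind]
            exact condExp_smul c (Set.indicator (Y ⁻¹' u) fun _ => (1:ℝ)) _
          calc ∫ ω in G ∩ B, (Set.indicator u fun _ => c) (Y ω) ∂μ
              = c • ∫ ω in G ∩ B, Set.indicator (Y ⁻¹' u) (fun _ => (1:ℝ)) ω ∂μ := by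
                rw [hcompind, integral_smul]
            _ = c • (μ (G ∩ B ∩ Y ⁻¹' u)).toReal := by
                rw [setIntegral_indicator hYu, setIntegral_const]
                simp [Measure.real]
            _ = c • (μ (G ∩ (B ∩ Y ⁻¹' u))).toReal := by rw [Set.inter_assoc]
            _ = c • ∫ ω in G, (μ[Set.indicator (B ∩ Y ⁻¹' u) fun _ => (1:ℝ)|
                  MeasurableSpace.comap Z inferInstance]) ω ∂μ := by
                rw [← hmGD _ (hB.inter hYu)]
            _ = c • ∫ ω in G, W ω * (μ[Set.indicator (Y ⁻¹' u) fun _ => (1:ℝ)|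
                  MeasurableSpace.comap Z inferInstance]) ω ∂μ := by
                congr 1
                refine setIntegral_congr_ae hG ?_
                filter_upwards [hK s u hs hu] with ω hω _
                exact hω
            _ = ∫ ω in G, W ω * (c • (μ[Set.indicator (Y ⁻¹' u) fun _ => (1:ℝ)|
                  MeasurableSpace.comap Z inferInstance]) ω) ∂μ := by
                rw [← integral_smul]
                refine integral_congr_ae (Filter.Eventually.of_forall fun ω => ?_)
                simp only [smul_eq_mul]
                ring
            _ = ∫ ω in G, W ω * (μ[fun ω' => (Set.indicator u fun _ => c) (Y ω')|
                  MeasurableSpace.comap Z inferInstance]) ω ∂μ := by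
                refine setIntegral_congr_ae hG ?_
                filter_upwards [hce] with ω hω _
                rw [hω]
        · -- addition
          intro φ ψ _ hφ hψ hPφ hPψ
          have hφμ : Integrable (fun ω => φ (Y ω)) μ :=
            (integrable_map_measure hφ.aestronglyMeasurable hY.aemeasurable).mp hφ
          have hψμ : Integrable (fun ω => ψ (Y ω)) μ :=
            (integrable_map_measure hψ.aestronglyMeasurable hY.aemeasurable).mp hψ
          have hceadd : μ[fun ω' => φ (Y ω') + ψ (Y ω')|MeasurableSpace.comap Z inferInstance]
              =ᵐ[μ] fun ω =>
                (μ[fun ω' => φ (Y ω')|MeasurableSpace.comap Z inferInstance]) ω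
                  + (μ[fun ω' => ψ (Y ω')|MeasurableSpace.comap Z inferInstance]) ω :=
            condExp_add hφμ hψμ _
          simp only [Pi.add_apply]
          rw [integral_add hφμ.integrableOn hψμ.integrableOn, hPφ, hPψ,
            ← integral_add (hWprod _).integrableOn (hWprod _).integrableOn]
          refine setIntegral_congr_ae hG ?_
          filter_upwards [hceadd] with ω hω _
          rw [hω, mul_add]
        · -- closedness in L¹
          exact CPIaux.closed_aux hY hGle hWabs hWm (G ∩ B) G
        · -- a.e. congruence
          intro φ ψ hφψ hφ hPφ
          have hcomp2 : ∀ᵐ ω ∂μ, φ (Y ω) = ψ (Y ω) := ae_of_ae_map hY.aemeasurable hφψ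
          have hL : ∫ ω in G ∩ B, ψ (Y ω) ∂μ = ∫ ω in G ∩ B, φ (Y ω) ∂μ :=
            integral_congr_ae (ae_restrict_of_ae (hcomp2.mono fun ω h => h.symm))
          have hE : μ[fun ω' => ψ (Y ω')|MeasurableSpace.comap Z inferInstance]
              =ᵐ[μ] μ[fun ω' => φ (Y ω')|MeasurableSpace.comap Z inferInstance] :=
            condExp_congr_ae (hcomp2.mono fun ω h => h.symm)
          rw [hL, hPφ]
          refine setIntegral_congr_ae hG ?_
          filter_upwards [hE] with ω hω _
          rw [hω]
      have hid : Integrable (fun y : ℝ => y) (μ.map Y) :=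
        (integrable_map_measure aestronglyMeasurable_id hY.aemeasurable).mpr hYint
      have hnum := hP hid
      -- the pull-out identity for the conditional expectation side
      have hmul_int : Integrable (fun ω => (μ[Y|MeasurableSpace.comap Z inferInstance]) ω
          * Set.indicator B (fun _ => (1:ℝ)) ω) μ := by
        refine Integrable.mono'
          (g := fun ω => |(μ[Y|MeasurableSpace.comap Z inferInstance]) ω|)
          integrable_condExp.abs
          ((stronglyMeasurable_condExp.mono hGle).aestronglyMeasurable.mul
            hBint.aestronglyMeasurable) ?_
        refine Filter.Eventually.of_forall fun ω => ?_
        rw [Real.norm_eq_abs, abs_mul]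
        refine mul_le_of_le_one_right (abs_nonneg _) ?_
        by_cases hω : ω ∈ B <;>
          simp [Set.indicator_of_mem, Set.indicator_of_notMem, hω]
      have hVmul : μ[fun ω => (μ[Y|MeasurableSpace.comap Z inferInstance]) ω
            * Set.indicator B (fun _ => (1:ℝ)) ω|MeasurableSpace.comap Z inferInstance]
          =ᵐ[μ] fun ω => (μ[Y|MeasurableSpace.comap Z inferInstance]) ω * W ω :=
        condExp_mul_of_stronglyMeasurable_left stronglyMeasurable_condExp hmul_int hBint
      have hindmul : Set.indicator B (μ[Y|MeasurableSpace.comap Z inferInstance])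
          = fun ω => (μ[Y|MeasurableSpace.comap Z inferInstance]) ω
              * Set.indicator B (fun _ => (1:ℝ)) ω := by
        funext ω
        by_cases hω : ω ∈ B <;>
          simp [Set.indicator_of_mem, Set.indicator_of_notMem, hω]
      calc ∫ ω in G ∩ B, (μ[Y|MeasurableSpace.comap Z inferInstance]) ω ∂μ
          = ∫ ω in G, Set.indicator B (μ[Y|MeasurableSpace.comap Z inferInstance]) ω ∂μ :=
            (setIntegral_indicator hB).symm
        _ = ∫ ω in G, (fun ω => (μ[Y|MeasurableSpace.comap Z inferInstance]) ω
              * Set.indicator B (fun _ => (1:ℝ)) ω) ω ∂μ := by rw [hindmul]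
        _ = ∫ ω in G, (μ[fun ω => (μ[Y|MeasurableSpace.comap Z inferInstance]) ω
              * Set.indicator B (fun _ => (1:ℝ)) ω|MeasurableSpace.comap Z inferInstance]) ω ∂μ :=
            (setIntegral_condExp hGle hmul_int hGm).symm
        _ = ∫ ω in G, W ω * (μ[Y|MeasurableSpace.comap Z inferInstance]) ω ∂μ := by
            refine setIntegral_congr_ae hG ?_
            filter_upwards [hVmul] with ω hω _
            rw [hω, mul_comm]
        _ = ∫ ω in G ∩ B, Y ω ∂μ := by
            have hnum' : ∫ ω in G ∩ B, Y ω ∂μ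
                = ∫ ω in G, W ω * (μ[Y|MeasurableSpace.comap Z inferInstance]) ω ∂μ := hnum
            rw [hnum']
    -- the π-system induction
    have hind : ∀ ⦃A : Set Ω⦄, MeasurableSet[MeasurableSpace.comap X inferInstance] A →
        ∫ ω in A, (μ[Y|MeasurableSpace.comap Z inferInstance]) ω ∂μ = ∫ ω in A, Y ω ∂μ := by
      refine MeasurableSpace.induction_on_inter (m := MeasurableSpace.comap X inferInstance)
        (C := fun A _ => ∫ ω in A, (μ[Y|MeasurableSpace.comap Z inferInstance]) ω ∂μ
          = ∫ ω in A, Y ω ∂μ) (s := C)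
        hmXeq hCpi ?_ ?_ ?_ ?_
      · simp
      · rintro A ⟨t, ht, s, hs, rfl⟩
        exact hbasic t ht s hs
      · intro A hAm hA
        have hA' : MeasurableSet A := hXle _ hAm
        have h1 := integral_add_compl hA' hintV
        have h2 := integral_add_compl hA' hYint
        have h3 : ∫ ω, (μ[Y|MeasurableSpace.comap Z inferInstance]) ω ∂μ = ∫ ω, Y ω ∂μ :=
          integral_condExp hGle
        linarith
      · intro f hdisj hmeas hsum
        have hf' : ∀ i, MeasurableSet (f i) := fun i => hXle _ (hmeas i)
        rw [integral_iUnion hf' hdisj hintV.integrableOn,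
          integral_iUnion hf' hdisj hYint.integrableOn]
        exact tsum_congr hsum
    exact (ae_eq_condExp_of_forall_setIntegral_eq hXle hYint
      (fun s _ _ => integrable_condExp.integrableOn)
      (fun s hsm _ => hind hsm)
      (AEStronglyMeasurable.mono hGleX
        (StronglyMeasurable.aestronglyMeasurable stronglyMeasurable_condExp))).symm
  -- Step B : the law of the updated vector is the law of X
  have hlaw : μ.map (fun ω => Function.update (X ω) j (Xdag ω)) = μ.map X := by
    set e : (({k : Fin p // k ≠ j} → ℝ) × ℝ) → (Fin p → ℝ) :=
      fun q k => if h : k = j then q.2 else q.1 ⟨k, h⟩ with hedef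
    have he : Measurable e := by
      refine measurable_pi_lambda _ fun k => ?_
      by_cases h : k = j
      · simpa [e, h] using measurable_snd
      · simpa [e, h, Function.comp_def] using
          (measurable_pi_apply (⟨k, h⟩ : {k : Fin p // k ≠ j})).comp measurable_fst
    have hUe : (fun ω => Function.update (X ω) j (Xdag ω)) = e ∘ (fun ω => (Z ω, Xdag ω)) := by
      funext ω
      funext k
      by_cases h : k = j
      · subst h; simp [e]
      · simp [e, h, Function.update_of_ne h, Z]
    have hXe : X = e ∘ (fun ω => (Z ω, X ω j)) := by
      funext ω
      funext k
      by_cases h : k = j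
      · subst h; simp [e]
      · simp [e, h, Z]
    have hpairdag : Measurable fun ω => (Z ω, Xdag ω) := hZ.prodMk hXdag
    have hpairj : Measurable fun ω => (Z ω, X ω j) := hZ.prodMk hXj
    have hfstdag : (μ.map fun ω => (Z ω, Xdag ω)).fst = μ.map Z :=
      Measure.fst_map_prodMk hXdag
    have hfstj : (μ.map fun ω => (Z ω, X ω j)).fst = μ.map Z :=
      Measure.fst_map_prodMk hXj
    have hmapdag : μ.map (fun ω => (Z ω, Xdag ω)) = (μ.map Z) ⊗ₘ condDistrib Xdag Z μ := by
      rw [condDistrib, ← hfstdag, Measure.disintegrate]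
    have hmapj : μ.map (fun ω => (Z ω, X ω j))
        = (μ.map Z) ⊗ₘ condDistrib (fun ω => X ω j) Z μ := by
      rw [condDistrib, ← hfstj, Measure.disintegrate]
    calc μ.map (fun ω => Function.update (X ω) j (Xdag ω))
        = (μ.map (fun ω => (Z ω, Xdag ω))).map e := by
          rw [Measure.map_map he hpairdag, ← hUe]
      _ = ((μ.map Z) ⊗ₘ condDistrib Xdag Z μ).map e := by rw [hmapdag]
      _ = ((μ.map Z) ⊗ₘ condDistrib (fun ω => X ω j) Z μ).map e := by
          rw [Measure.compProd_congr hdist]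
      _ = (μ.map (fun ω => (Z ω, X ω j))).map e := by rw [hmapj]
      _ = μ.map X := by rw [Measure.map_map he hpairj, ← hXe]
  -- Step C : combine
  set g : ({k : Fin p // k ≠ j} → ℝ) → ℝ := fun v => ∫ y, y ∂(condDistrib Y Z μ v) with hgdef
  have hgsm : StronglyMeasurable g := by
    have huncurry : StronglyMeasurable
        (Function.uncurry fun (_ : {k : Fin p // k ≠ j} → ℝ) (y : ℝ) => y) :=
      measurable_snd.stronglyMeasurable
    exact huncurry.integral_kernel_prod_right (κ := condDistrib Y Z μ)
  have hgmeas : Measurable g := hgsm.measurable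
  have hgZ : μ[Y|MeasurableSpace.comap Z inferInstance] =ᵐ[μ] fun ω => g (Z ω) :=
    condExp_ae_eq_integral_condDistrib' hZ hYint
  have h1 : (fun ω => m (X ω)) =ᵐ[μ] fun ω => g (Z ω) := hver.symm.trans (haveA.trans hgZ)
  set S : Set (Fin p → ℝ) := {v | m v ≠ g (r v)} with hSdef
  have hSmeas : MeasurableSet S := (measurableSet_eq_fun hm (hgmeas.comp hr)).compl
  have hS0 : μ.map X S = 0 := by
    rw [Measure.map_apply hX hSmeas]
    exact ae_iff.mp h1
  have hUmeas : Measurable fun ω => Function.update (X ω) j (Xdag ω) := by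
    refine measurable_pi_lambda _ fun k => ?_
    by_cases h : k = j
    · subst h
      simpa [Function.update_self] using hXdag
    · simpa [Function.update_of_ne h, Function.comp_def] using (measurable_pi_apply k).comp hX
  have hU0 : μ ((fun ω => Function.update (X ω) j (Xdag ω)) ⁻¹' S) = 0 := by
    rw [← Measure.map_apply hUmeas hSmeas, hlaw]
    exact hS0
  have h2 : (fun ω => m (Function.update (X ω) j (Xdag ω))) =ᵐ[μ] fun ω => g (Z ω) := by
    have hae : ∀ᵐ ω ∂μ, Function.update (X ω) j (Xdag ω) ∉ S := by
      rw [ae_iff]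
      simp only [not_not]
      exact hU0
    filter_upwards [hae] with ω hω
    have heq : m (Function.update (X ω) j (Xdag ω))
        = g (r (Function.update (X ω) j (Xdag ω))) := by
      by_contra hne
      exact hω hne
    rw [heq]
    congr 1
    funext k
    exact Function.update_of_ne k.2 (Xdag ω) (X ω)
  have hsame : (fun ω => m (Function.update (X ω) j (Xdag ω))) =ᵐ[μ] fun ω => m (X ω) :=
    h2.trans h1.symm
  refine ⟨?_, hsame⟩
  have hsq : (fun ω => (Y ω - m (Function.update (X ω) j (Xdag ω))) ^ 2)
      =ᵐ[μ] fun ω => (Y ω - m (X ω)) ^ 2 := by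
    filter_upwards [hsame] with ω hω
    rw [hω]
  rw [integral_congr_ae hsq, sub_self]
end

section
/- Suppose g : [0,1] → [0,1] is measurable, E Y² < ∞, and Var(g(Xⱼ) | X₋ⱼ) ≥ ς₁ and Var(Y | X) ≥ ς₂ almost surely for some constants ς₁, ς₂ > 0. Then: (i) Var{[Y − E(Y | X₋ⱼ)][g(Xⱼ) − E g(Xⱼ)]} ≥ ς₂·ς₁²/4; (ii) Var{[Y − E(Y | X₋ⱼ)][g(Xⱼ) − E(g(Xⱼ) | X₋ⱼ)]} ≥ ς₂·ς₁²/4; (iii) Var{[Y − E(Y | X₋ⱼ)][g(Xⱼ) − E g(Xⱼ)]} ≤ E Y²; and (iv) Var{[Y − E(Y | X₋ⱼ)][g(Xⱼ) − E(g(Xⱼ) | X₋ⱼ)]} ≤ E Y². -/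
open MeasureTheory ProbabilityTheory

section Aux

lemma aux_integrable_mul2 {α : Type} {m0 : MeasurableSpace α} {μ : Measure α} {f g : α → ℝ}
    (hf : MemLp f 2 μ) (hg : MemLp g 2 μ) :
    Integrable (fun ω => f ω * g ω) μ := by
  refine Integrable.mono' (((hf.integrable_sq).add (hg.integrable_sq)).div_const 2)
    (hf.aestronglyMeasurable.mul hg.aestronglyMeasurable)
    (Filter.Eventually.of_forall fun ω => ?_)
  simp only [Real.norm_eq_abs, Pi.add_apply]
  rw [abs_mul]
  nlinarith [sq_nonneg (|f ω| - |g ω|), sq_abs (f ω), sq_abs (g ω),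
    abs_nonneg (f ω), abs_nonneg (g ω)]

lemma aux_memℒp_condexp {α : Type} {m m0 : MeasurableSpace α} {μ : Measure α}
    [IsFiniteMeasure μ] (hm : m ≤ m0)
    {f : α → ℝ} (hf : MemLp f 2 μ) : MemLp (μ[f|m]) 2 μ := by
  haveI : SigmaFinite (μ.trim hm) := by
    have := isFiniteMeasure_trim (μ := μ) hm; infer_instance
  have hfi : Integrable f μ := hf.integrable one_le_two
  set F : Lp ℝ 2 μ := ↑(condExpL2 ℝ ℝ hm (hf.toLp f)) with hF
  have hFmem : MemLp (F : α → ℝ) 2 μ := Lp.memLp F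
  have hFi : Integrable (F : α → ℝ) μ := hFmem.integrable one_le_two
  have h := ae_eq_condExp_of_forall_setIntegral_eq hm hfi
    (fun s _ _ => hFi.integrableOn)
    (fun s hs hμs => by
      rw [show ∫ x in s, (F : α → ℝ) x ∂μ
          = ∫ x in s, (condExpL2 ℝ ℝ hm (hf.toLp f) : α → ℝ) x ∂μ from rfl]
      rw [integral_condExpL2_eq hm (hf.toLp f) hs hμs.ne]
      exact integral_congr_ae (ae_restrict_of_ae (hf.coeFn_toLp)))
    (by
      rw [hF]
      exact lpMeas.aestronglyMeasurable _)
  exact hFmem.ae_eq h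

/-- Main abstract lemma. -/
lemma aux_main {α : Type} {m₁ m₂ m0 : MeasurableSpace α} {μ : Measure α}
    [IsProbabilityMeasure μ] (h12 : m₁ ≤ m₂) (hm2 : m₂ ≤ m0)
    (Y W : α → ℝ) (hYm : MemLp Y 2 μ)
    (hW : StronglyMeasurable[m₂] W) (hWbd : ∀ᵐ ω ∂μ, |W ω| ≤ 1)
    (ς₂ : ℝ)
    (hς₂ : ∀ᵐ ω ∂μ, ς₂ ≤ (μ[fun ω' => (Y ω' - (μ[Y|m₂]) ω') ^ 2|m₂]) ω) :
    ς₂ * ∫ ω, W ω ^ 2 ∂μ ≤ variance (fun ω => (Y ω - (μ[Y|m₁]) ω) * W ω) μ ∧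
    variance (fun ω => (Y ω - (μ[Y|m₁]) ω) * W ω) μ ≤ ∫ ω, Y ω ^ 2 ∂μ := by
  have hm1 : m₁ ≤ m0 := h12.trans hm2
  haveI : SigmaFinite (μ.trim hm1) := by
    have := isFiniteMeasure_trim (μ := μ) hm1; infer_instance
  haveI : SigmaFinite (μ.trim hm2) := by
    have := isFiniteMeasure_trim (μ := μ) hm2; infer_instance
  set a := μ[Y|m₁] with ha
  set E2 := μ[Y|m₂] with hE2def
  have haSM : StronglyMeasurable[m₁] a := stronglyMeasurable_condExp
  have haSM2 : StronglyMeasurable[m₂] a := haSM.mono h12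
  have hE2SM : StronglyMeasurable[m₂] E2 := stronglyMeasurable_condExp
  have ha2 : MemLp a 2 μ := aux_memℒp_condexp hm1 hYm
  have hE22 : MemLp E2 2 μ := aux_memℒp_condexp hm2 hYm
  set Z := fun ω => Y ω - a ω with hZdef
  have hZ2 : MemLp Z 2 μ := by
    have := hYm.sub ha2
    exact this.ae_eq (Filter.Eventually.of_forall fun ω => rfl)
  have hWae : AEStronglyMeasurable W μ := (hW.mono hm2).aestronglyMeasurable
  set f := fun ω => W ω * Z ω with hfdef
  have hfae : AEStronglyMeasurable f μ := hWae.mul hZ2.aestronglyMeasurable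
  have hf2 : MemLp f 2 μ := by
    refine MemLp.of_le hZ2 hfae ?_
    filter_upwards [hWbd] with ω h
    rw [Real.norm_eq_abs, Real.norm_eq_abs, abs_mul]
    nlinarith [abs_nonneg (Z ω)]
  -- integrabilities
  have hYi : Integrable Y μ := hYm.integrable one_le_two
  have hai : Integrable a μ := integrable_condExp
  have hE2i : Integrable E2 μ := integrable_condExp
  have hZi : Integrable Z μ := hZ2.integrable one_le_two
  have hYsq : Integrable (fun ω => Y ω ^ 2) μ := hYm.integrable_sq
  have hasq : Integrable (fun ω => a ω ^ 2) μ := ha2.integrable_sq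
  have hE2sq : Integrable (fun ω => E2 ω ^ 2) μ := hE22.integrable_sq
  have hZsq : Integrable (fun ω => Z ω ^ 2) μ := hZ2.integrable_sq
  have hfi : Integrable f μ := hf2.integrable one_le_two
  have hfsq : Integrable (fun ω => f ω ^ 2) μ := hf2.integrable_sq
  have haY : Integrable (fun ω => a ω * Y ω) μ := aux_integrable_mul2 ha2 hYm
  have hE2Y : Integrable (fun ω => E2 ω * Y ω) μ := aux_integrable_mul2 hE22 hYm
  -- conditional expectation computations
  have hA : μ[Z|m₂] =ᵐ[μ] fun ω => E2 ω - a ω := by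
    have h1 : μ[Z|m₂] =ᵐ[μ] μ[Y|m₂] - μ[a|m₂] := condExp_sub hYi hai _
    have h2 : μ[a|m₂] = a := condExp_of_stronglyMeasurable hm2 haSM2 hai
    filter_upwards [h1] with ω hω
    simp only [hω, Pi.sub_apply, h2, ← hE2def]
  -- generic square expansion for condexp
  have sq_expand : ∀ (b : α → ℝ), StronglyMeasurable[m₂] b → MemLp b 2 μ →
      μ[fun ω => (Y ω - b ω) ^ 2|m₂] =ᵐ[μ]
        fun ω => (μ[fun ω' => Y ω' ^ 2|m₂]) ω + b ω ^ 2 - 2 * b ω * E2 ω := by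
    intro b hbSM hb2
    have hbi : Integrable b μ := hb2.integrable one_le_two
    have hbsq : Integrable (fun ω => b ω ^ 2) μ := hb2.integrable_sq
    have hbY : Integrable (fun ω => 2 * b ω * Y ω) μ := by
      have := (aux_integrable_mul2 hb2 hYm).const_mul 2
      refine this.congr (Filter.Eventually.of_forall fun ω => by ring)
    have hkey : (fun ω => (Y ω - b ω) ^ 2) =
        (fun ω => Y ω ^ 2 + b ω ^ 2) - fun ω => (2 * b ω) * Y ω := by
      funext ω; simp only [Pi.sub_apply]; ring
    have h1 : μ[(fun ω => Y ω ^ 2 + b ω ^ 2) - fun ω => (2 * b ω) * Y ω|m₂] =ᵐ[μ]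
        μ[fun ω => Y ω ^ 2 + b ω ^ 2|m₂] - μ[fun ω => (2 * b ω) * Y ω|m₂] := by
      refine condExp_sub (hYsq.add hbsq) ?_ _
      exact hbY.congr (Filter.Eventually.of_forall fun ω => by simp only [Pi.mul_apply]; try ring)
    have h2 : μ[fun ω => Y ω ^ 2 + b ω ^ 2|m₂] =ᵐ[μ]
        μ[fun ω => Y ω ^ 2|m₂] + μ[fun ω => b ω ^ 2|m₂] := condExp_add hYsq hbsq _
    have h3 : μ[fun ω => b ω ^ 2|m₂] = fun ω => b ω ^ 2 := by
      refine condExp_of_stronglyMeasurable hm2 ?_ hbsq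
      exact (hbSM.measurable.pow_const 2).stronglyMeasurable
    have h4 : μ[fun ω => (2 * b ω) * Y ω|m₂] =ᵐ[μ] (fun ω => 2 * b ω) * μ[Y|m₂] := by
      refine condExp_mul_of_stronglyMeasurable_left (hbSM.const_mul 2) ?_ hYi
      exact hbY.congr (Filter.Eventually.of_forall fun ω => by simp only [Pi.mul_apply]; try ring)
    rw [hkey]
    filter_upwards [h1, h2, h4] with ω h1ω h2ω h4ω
    simp only [Pi.sub_apply, Pi.add_apply, Pi.mul_apply] at h1ω h2ω h4ω ⊢
    rw [h1ω, h2ω, h4ω, h3]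
    try simp only [← hE2def]
    try ring
  have hB := sq_expand a haSM2 ha2
  have hV := sq_expand E2 hE2SM hE22
  -- B - A^2 ≥ ς₂ a.e.
  have hBA : ∀ᵐ ω ∂μ, ς₂ + (μ[Z|m₂]) ω ^ 2 ≤ (μ[fun ω' => Z ω' ^ 2|m₂]) ω := by
    have hBZ : μ[fun ω' => Z ω' ^ 2|m₂] =ᵐ[μ]
        fun ω => (μ[fun ω' => Y ω' ^ 2|m₂]) ω + a ω ^ 2 - 2 * a ω * E2 ω := by
      have : (fun ω' => Z ω' ^ 2) = fun ω' => (Y ω' - a ω') ^ 2 := rfl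
      rw [this]; exact hB
    filter_upwards [hς₂, hV, hA, hBZ] with ω h2 hVω hAω hBω
    have h2' : ς₂ ≤ (μ[fun ω' => Y ω' ^ 2|m₂]) ω - E2 ω ^ 2 := by
      rw [hVω] at h2; linarith [h2]
    rw [hBω, hAω]
    nlinarith [h2']
  -- conditional expectations of f and f^2
  have hfc : μ[f|m₂] =ᵐ[μ] W * μ[Z|m₂] :=
    condExp_mul_of_stronglyMeasurable_left hW hfi hZi
  have hWsqSM : StronglyMeasurable[m₂] (fun ω => W ω ^ 2) :=
    (hW.measurable.pow_const 2).stronglyMeasurable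
  have hfsq' : Integrable (fun ω => W ω ^ 2 * Z ω ^ 2) μ :=
    hfsq.congr (Filter.Eventually.of_forall fun ω => by simp only [hfdef]; ring)
  have hfsqc : μ[fun ω => f ω ^ 2|m₂] =ᵐ[μ]
      (fun ω => W ω ^ 2) * μ[fun ω => Z ω ^ 2|m₂] := by
    have hk : (fun ω => f ω ^ 2) = (fun ω => W ω ^ 2) * fun ω => Z ω ^ 2 := by
      funext ω; simp only [Pi.mul_apply, hfdef]; ring
    rw [hk]
    exact condExp_mul_of_stronglyMeasurable_left hWsqSM (by rw [← hk]; exact hfsq) hZsq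
  -- h := W * A and its properties
  set A := μ[Z|m₂] with hAdef
  have hAmem : MemLp A 2 μ := aux_memℒp_condexp hm2 hZ2
  set h := fun ω => W ω * A ω with hhdef
  have hhae : AEStronglyMeasurable h μ := hWae.mul hAmem.aestronglyMeasurable
  have hh2 : MemLp h 2 μ := by
    refine MemLp.of_le hAmem hhae ?_
    filter_upwards [hWbd] with ω hω
    rw [Real.norm_eq_abs, Real.norm_eq_abs, abs_mul]
    nlinarith [abs_nonneg (A ω)]
  have hhsq : Integrable (fun ω => h ω ^ 2) μ := hh2.integrable_sq
  -- mean of f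
  have hmf : ∫ ω, f ω ∂μ = ∫ ω, h ω ∂μ := by
    rw [← integral_condExp hm2 (f := f)]
    exact integral_congr_ae hfc
  have hmfsq : (∫ ω, f ω ∂μ) ^ 2 ≤ ∫ ω, h ω ^ 2 ∂μ := by
    rw [hmf]
    have hv := variance_nonneg h μ
    rw [variance_eq_sub hh2] at hv
    simp only [Pi.pow_apply] at hv
    linarith
  -- integral of f^2
  have hintfsq : ∫ ω, f ω ^ 2 ∂μ = ∫ ω, W ω ^ 2 * (μ[fun ω' => Z ω' ^ 2|m₂]) ω ∂μ := by
    rw [← integral_condExp hm2 (f := fun ω => f ω ^ 2)]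
    refine integral_congr_ae ?_
    filter_upwards [hfsqc] with ω hω
    simpa using hω
  have hWsqi : Integrable (fun ω => W ω ^ 2) μ := by
    refine (integrable_const (1 : ℝ)).mono' ?_ ?_
    · exact (hWae.mul hWae).congr (Filter.Eventually.of_forall fun ω => by
        simp only [Pi.mul_apply]; try ring)
    · filter_upwards [hWbd] with ω hω
      rw [Real.norm_eq_abs, abs_of_nonneg (sq_nonneg _)]
      obtain ⟨hl, hr⟩ := abs_le.mp hω
      nlinarith
  have hWB : Integrable (fun ω => W ω ^ 2 * (μ[fun ω' => Z ω' ^ 2|m₂]) ω) μ := by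
    refine Integrable.bdd_mul (f := fun ω => W ω ^ 2) (c := 1) integrable_condExp ?_ ?_
    · exact (hWae.mul hWae).congr (Filter.Eventually.of_forall fun ω => by
        simp only [Pi.mul_apply]; try ring)
    · filter_upwards [hWbd] with ω hω
      rw [Real.norm_eq_abs, abs_of_nonneg (sq_nonneg _)]
      obtain ⟨hl, hr⟩ := abs_le.mp hω
      nlinarith
  -- key lower bound on ∫ f^2
  have hkeylow : ∫ ω, h ω ^ 2 ∂μ + ς₂ * ∫ ω, W ω ^ 2 ∂μ ≤ ∫ ω, f ω ^ 2 ∂μ := by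
    rw [hintfsq, ← integral_const_mul, ← integral_add hhsq (hWsqi.const_mul ς₂)]
    refine integral_mono_ae (hhsq.add (hWsqi.const_mul ς₂)) hWB ?_
    filter_upwards [hBA] with ω hω
    simp only [hhdef]
    nlinarith [sq_nonneg (W ω), sq_nonneg (W ω * A ω), hω]
  -- variance identity
  have hvar : variance f μ = ∫ ω, f ω ^ 2 ∂μ - (∫ ω, f ω ∂μ) ^ 2 := by
    rw [variance_eq_sub hf2]
    simp only [Pi.pow_apply]
  have hgoalfun : (fun ω => (Y ω - (μ[Y|m₁]) ω) * W ω) = f := by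
    funext ω; simp only [hfdef, hZdef, ← ha]; ring
  constructor
  · rw [hgoalfun, hvar]
    linarith [hkeylow, hmfsq]
  · rw [hgoalfun, hvar]
    have h1 : ∫ ω, f ω ^ 2 ∂μ ≤ ∫ ω, Z ω ^ 2 ∂μ := by
      refine integral_mono_ae hfsq hZsq ?_
      filter_upwards [hWbd] with ω hω
      simp only [hfdef]
      obtain ⟨hl, hr⟩ := abs_le.mp hω
      have hW2 : W ω ^ 2 ≤ 1 := by nlinarith
      nlinarith [mul_le_mul_of_nonneg_right hW2 (sq_nonneg (Z ω)), sq_nonneg (Z ω)]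
    have haYa : ∫ ω, a ω * Y ω ∂μ = ∫ ω, a ω ^ 2 ∂μ := by
      rw [← integral_condExp hm1 (f := fun ω => a ω * Y ω)]
      refine integral_congr_ae ?_
      have hmul : μ[fun ω => a ω * Y ω|m₁] =ᵐ[μ] fun ω => a ω * a ω :=
        condExp_mul_of_stronglyMeasurable_left haSM haY hYi
      filter_upwards [hmul] with ω hω
      rw [hω]
      ring
    have hZint : ∫ ω, Z ω ^ 2 ∂μ = ∫ ω, Y ω ^ 2 ∂μ - ∫ ω, a ω ^ 2 ∂μ := by
      have hk : (fun ω => Z ω ^ 2) = fun ω => (Y ω ^ 2 + a ω ^ 2) - 2 * (a ω * Y ω) := by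
        funext ω; simp only [hZdef]; ring
      have hint1 : Integrable (fun ω => Y ω ^ 2 + a ω ^ 2) μ := hYsq.add hasq
      have hint2 : Integrable (fun ω => 2 * (a ω * Y ω)) μ := haY.const_mul 2
      rw [hk, integral_sub hint1 hint2, integral_add hYsq hasq, integral_const_mul, haYa]
      ring
    have hasqnn : 0 ≤ ∫ ω, a ω ^ 2 ∂μ := integral_nonneg fun ω => sq_nonneg _
    nlinarith [sq_nonneg (∫ ω, f ω ∂μ)]

end Aux

/-- **Lemma (lower and upper variance bounds).**  Suppose `g : [0,1] → [0,1]` is measurable,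
`E Y² < ∞`, and `Var(g(Xⱼ) | X₋ⱼ) ≥ ς₁`, `Var(Y | X) ≥ ς₂` almost surely for some
`ς₁, ς₂ > 0`.  Then
(i)  `Var{[Y − E(Y|X₋ⱼ)][g(Xⱼ) − E g(Xⱼ)]} ≥ ς₂ ς₁² / 4`;
(ii) `Var{[Y − E(Y|X₋ⱼ)][g(Xⱼ) − E(g(Xⱼ)|X₋ⱼ)]} ≥ ς₂ ς₁² / 4`;
(iii) `Var{[Y − E(Y|X₋ⱼ)][g(Xⱼ) − E g(Xⱼ)]} ≤ E Y²`;
(iv)  `Var{[Y − E(Y|X₋ⱼ)][g(Xⱼ) − E(g(Xⱼ)|X₋ⱼ)]} ≤ E Y²`. -/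
theorem stmt_13
    (Ω : Type) [MeasurableSpace Ω]
    (μ : Measure Ω) [IsProbabilityMeasure μ]
    (p : ℕ) (j : Fin p) (X : Ω → Fin p → ℝ) (Y : Ω → ℝ)
    (hX : Measurable X) (hY : Measurable Y)
    (hXrange : ∀ ω k, X ω k ∈ Set.Icc (0 : ℝ) 1)
    (g : ℝ → ℝ) (hg : Measurable g)
    (hgrange : ∀ x ∈ Set.Icc (0 : ℝ) 1, g x ∈ Set.Icc (0 : ℝ) 1)
    (hY2 : Integrable (fun ω => (Y ω) ^ 2) μ)
    (ς₁ ς₂ : ℝ) (hς₁pos : 0 < ς₁) (hς₂pos : 0 < ς₂)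
    -- Var(g(Xⱼ) | X₋ⱼ) ≥ ς₁ almost surely
    (hς₁ : ∀ᵐ ω ∂μ, ς₁ ≤
      (μ[fun ω' => (g (X ω' j)
          - (μ[fun ω'' => g (X ω'' j)
              | MeasurableSpace.comap (fun ω₀ (k : {k : Fin p // k ≠ j}) => X ω₀ k.1)
                  inferInstance]) ω') ^ 2
        | MeasurableSpace.comap (fun ω₀ (k : {k : Fin p // k ≠ j}) => X ω₀ k.1)
            inferInstance]) ω)
    -- Var(Y | X) ≥ ς₂ almost surely
    (hς₂ : ∀ᵐ ω ∂μ, ς₂ ≤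
      (μ[fun ω' => (Y ω' - (μ[Y | MeasurableSpace.comap X inferInstance]) ω') ^ 2
        | MeasurableSpace.comap X inferInstance]) ω) :
    (ς₂ * ς₁ ^ 2 / 4 ≤
      variance (fun ω =>
        (Y ω - (μ[Y | MeasurableSpace.comap
            (fun ω₀ (k : {k : Fin p // k ≠ j}) => X ω₀ k.1) inferInstance]) ω)
        * (g (X ω j) - ∫ ω', g (X ω' j) ∂μ)) μ) ∧
    (ς₂ * ς₁ ^ 2 / 4 ≤
      variance (fun ω =>
        (Y ω - (μ[Y | MeasurableSpace.comap
            (fun ω₀ (k : {k : Fin p // k ≠ j}) => X ω₀ k.1) inferInstance]) ω)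
        * (g (X ω j) - (μ[fun ω' => g (X ω' j) | MeasurableSpace.comap
            (fun ω₀ (k : {k : Fin p // k ≠ j}) => X ω₀ k.1) inferInstance]) ω)) μ) ∧
    (variance (fun ω =>
        (Y ω - (μ[Y | MeasurableSpace.comap
            (fun ω₀ (k : {k : Fin p // k ≠ j}) => X ω₀ k.1) inferInstance]) ω)
        * (g (X ω j) - ∫ ω', g (X ω' j) ∂μ)) μ ≤ ∫ ω, (Y ω) ^ 2 ∂μ) ∧
    (variance (fun ω =>
        (Y ω - (μ[Y | MeasurableSpace.comap
            (fun ω₀ (k : {k : Fin p // k ≠ j}) => X ω₀ k.1) inferInstance]) ω)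
        * (g (X ω j) - (μ[fun ω' => g (X ω' j) | MeasurableSpace.comap
            (fun ω₀ (k : {k : Fin p // k ≠ j}) => X ω₀ k.1) inferInstance]) ω)) μ
      ≤ ∫ ω, (Y ω) ^ 2 ∂μ) := by
  classical
  -- ambient measurability facts (before introducing sub-σ-algebras)
  have hπm : Measurable (fun (v : Fin p → ℝ) (k : {k : Fin p // k ≠ j}) => v k.1) :=
    measurable_pi_lambda _ fun k => measurable_pi_apply k.1
  have hGmeas : Measurable (fun ω => g (X ω j)) := hg.comp hX.eval
  have hGrange : ∀ ω, g (X ω j) ∈ Set.Icc (0 : ℝ) 1 := fun ω => hgrange _ (hXrange ω j)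
  have hGmem : MemLp (fun ω => g (X ω j)) 2 μ := by
    refine MemLp.of_bound hGmeas.aestronglyMeasurable 1 (ae_of_all _ fun ω => ?_)
    rw [Real.norm_eq_abs, abs_le]
    exact ⟨by linarith [(hGrange ω).1], (hGrange ω).2⟩
  have hGi : Integrable (fun ω => g (X ω j)) μ := hGmem.integrable one_le_two
  have hGsq : Integrable (fun ω => (g (X ω j)) ^ 2) μ := hGmem.integrable_sq
  have hYmem : MemLp Y 2 μ := (memLp_two_iff_integrable_sq hY.aestronglyMeasurable).mpr hY2
  have hXc : Measurable[MeasurableSpace.comap X inferInstance] X :=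
    measurable_iff_comap_le.mpr le_rfl
  have hGm2 : Measurable[MeasurableSpace.comap X inferInstance] (fun ω => g (X ω j)) := by
    refine measurable_iff_comap_le.mpr ?_
    have heq : (fun ω => g (X ω j)) = (g ∘ fun v : Fin p → ℝ => v j) ∘ X := rfl
    rw [heq, ← MeasurableSpace.comap_comp]
    exact MeasurableSpace.comap_mono
      (measurable_iff_comap_le.mp (hg.comp (measurable_pi_apply j)))
  have hm2 := measurable_iff_comap_le.mp hX
  have h12 : MeasurableSpace.comap (fun ω₀ (k : {k : Fin p // k ≠ j}) => X ω₀ k.1)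
      inferInstance ≤ MeasurableSpace.comap X inferInstance := by
    have heq : (fun ω₀ (k : {k : Fin p // k ≠ j}) => X ω₀ k.1)
        = (fun (v : Fin p → ℝ) (k : {k : Fin p // k ≠ j}) => v k.1) ∘ X := rfl
    rw [heq, ← MeasurableSpace.comap_comp]
    exact MeasurableSpace.comap_mono (measurable_iff_comap_le.mp hπm)
  have hm1 := h12.trans hm2
  -- the two σ-algebras
  set m1 := MeasurableSpace.comap (fun ω₀ (k : {k : Fin p // k ≠ j}) => X ω₀ k.1)
    inferInstance with hm1def
  set m2 := MeasurableSpace.comap X inferInstance with hm2def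
  haveI : SigmaFinite (μ.trim hm1) := by
    have := isFiniteMeasure_trim (μ := μ) hm1; infer_instance
  -- the conditional mean of g(Xⱼ)
  have hcgmem : MemLp (μ[fun ω'' => g (X ω'' j)|m1]) 2 μ := aux_memℒp_condexp hm1 hGmem
  have hcgsq : Integrable (fun ω => (μ[fun ω'' => g (X ω'' j)|m1]) ω ^ 2) μ :=
    hcgmem.integrable_sq
  have hcg01 : ∀ᵐ ω ∂μ, (μ[fun ω'' => g (X ω'' j)|m1]) ω ∈ Set.Icc (0 : ℝ) 1 := by
    have h0 : 0 ≤ᵐ[μ] μ[fun ω'' => g (X ω'' j)|m1] :=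
      condExp_nonneg (ae_of_all _ fun ω => (hGrange ω).1)
    have h1 : μ[fun ω'' => g (X ω'' j)|m1] ≤ᵐ[μ] μ[fun _ => (1 : ℝ)|m1] :=
      condExp_mono hGi (integrable_const 1) (ae_of_all _ fun ω => (hGrange ω).2)
    rw [condExp_const hm1] at h1
    filter_upwards [h0, h1] with ω ha hb
    exact ⟨ha, hb⟩
  -- W₂ facts
  have hW2SM : StronglyMeasurable[m2]
      (fun ω => g (X ω j) - (μ[fun ω'' => g (X ω'' j)|m1]) ω) :=
    hGm2.stronglyMeasurable.sub (stronglyMeasurable_condExp.mono h12)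
  have hW2bd : ∀ᵐ ω ∂μ, |g (X ω j) - (μ[fun ω'' => g (X ω'' j)|m1]) ω| ≤ 1 := by
    filter_upwards [hcg01] with ω hω
    have hG := hGrange ω
    rw [abs_le]
    exact ⟨by linarith [hω.2, hG.1], by linarith [hω.1, hG.2]⟩
  have hW2ae : AEStronglyMeasurable (m := _)
      (fun ω => g (X ω j) - (μ[fun ω'' => g (X ω'' j)|m1]) ω) μ :=
    hGmeas.aestronglyMeasurable.sub (stronglyMeasurable_condExp.mono hm1).aestronglyMeasurable
  have hW2mem : MemLp (fun ω => g (X ω j) - (μ[fun ω'' => g (X ω'' j)|m1]) ω) 2 μ := by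
    refine MemLp.of_bound hW2ae 1 ?_
    filter_upwards [hW2bd] with ω hω
    rwa [Real.norm_eq_abs]
  have hW2sq : Integrable
      (fun ω => (g (X ω j) - (μ[fun ω'' => g (X ω'' j)|m1]) ω) ^ 2) μ := hW2mem.integrable_sq
  -- lower bound on ∫ W₂²
  have hI2 : ς₁ ≤ ∫ ω, (g (X ω j) - (μ[fun ω'' => g (X ω'' j)|m1]) ω) ^ 2 ∂μ := by
    have h1 : ∫ (_ : Ω), ς₁ ∂μ ≤
        ∫ ω, (μ[fun ω' => (g (X ω' j) - (μ[fun ω'' => g (X ω'' j)|m1]) ω') ^ 2|m1]) ω ∂μ :=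
      integral_mono_ae (integrable_const ς₁) integrable_condExp hς₁
    rw [integral_const] at h1
    simp only [probReal_univ, measure_univ, ENNReal.toReal_one, one_smul] at h1
    rwa [integral_condExp hm1] at h1
  have hub2 : ∫ ω, (g (X ω j) - (μ[fun ω'' => g (X ω'' j)|m1]) ω) ^ 2 ∂μ ≤ 1 := by
    have : ∫ ω, (g (X ω j) - (μ[fun ω'' => g (X ω'' j)|m1]) ω) ^ 2 ∂μ
        ≤ ∫ (_ : Ω), (1 : ℝ) ∂μ := by
      refine integral_mono_ae hW2sq (integrable_const 1) ?_
      filter_upwards [hW2bd] with ω hω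
      obtain ⟨hl, hr⟩ := abs_le.mp hω
      nlinarith
    simpa using this
  -- W₁ facts
  have hc0 : 0 ≤ ∫ ω', g (X ω' j) ∂μ := integral_nonneg fun ω => (hGrange ω).1
  have hc1 : ∫ ω', g (X ω' j) ∂μ ≤ 1 := by
    have : ∫ ω', g (X ω' j) ∂μ ≤ ∫ (_ : Ω), (1 : ℝ) ∂μ :=
      integral_mono hGi (integrable_const 1) fun ω => (hGrange ω).2
    simpa using this
  have hW1SM : StronglyMeasurable[m2] (fun ω => g (X ω j) - ∫ ω', g (X ω' j) ∂μ) :=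
    hGm2.stronglyMeasurable.sub stronglyMeasurable_const
  have hW1bd : ∀ᵐ ω ∂μ, |g (X ω j) - ∫ ω', g (X ω' j) ∂μ| ≤ 1 := by
    refine ae_of_all _ fun ω => ?_
    have hG := hGrange ω
    rw [abs_le]
    exact ⟨by linarith [hG.1], by linarith [hG.2]⟩
  -- cross term : ∫ cg · G = ∫ cg²
  have hcgG : Integrable (fun ω => (μ[fun ω'' => g (X ω'' j)|m1]) ω * g (X ω j)) μ :=
    aux_integrable_mul2 hcgmem hGmem
  have ecross : ∫ ω, (μ[fun ω'' => g (X ω'' j)|m1]) ω * g (X ω j) ∂μ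
      = ∫ ω, (μ[fun ω'' => g (X ω'' j)|m1]) ω ^ 2 ∂μ := by
    rw [← integral_condExp hm1 (f := fun ω => (μ[fun ω'' => g (X ω'' j)|m1]) ω * g (X ω j))]
    refine integral_congr_ae ?_
    have hmul : μ[fun ω => (μ[fun ω'' => g (X ω'' j)|m1]) ω * g (X ω j)|m1] =ᵐ[μ]
        fun ω => (μ[fun ω'' => g (X ω'' j)|m1]) ω * (μ[fun ω'' => g (X ω'' j)|m1]) ω :=
      condExp_mul_of_stronglyMeasurable_left stronglyMeasurable_condExp hcgG hGi
    filter_upwards [hmul] with ω hω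
    rw [hω]
    ring
  -- ∫ W₂² = ∫ G² - ∫ cg²
  have e2 : ∫ ω, (g (X ω j) - (μ[fun ω'' => g (X ω'' j)|m1]) ω) ^ 2 ∂μ
      = ∫ ω, (g (X ω j)) ^ 2 ∂μ - ∫ ω, (μ[fun ω'' => g (X ω'' j)|m1]) ω ^ 2 ∂μ := by
    have hk : (fun ω => (g (X ω j) - (μ[fun ω'' => g (X ω'' j)|m1]) ω) ^ 2)
        = fun ω => ((g (X ω j)) ^ 2 + (μ[fun ω'' => g (X ω'' j)|m1]) ω ^ 2)
          - 2 * ((μ[fun ω'' => g (X ω'' j)|m1]) ω * g (X ω j)) := by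
      funext ω; ring
    have hint1 : Integrable
        (fun ω => (g (X ω j)) ^ 2 + (μ[fun ω'' => g (X ω'' j)|m1]) ω ^ 2) μ :=
      hGsq.add hcgsq
    have hint2 : Integrable
        (fun ω => 2 * ((μ[fun ω'' => g (X ω'' j)|m1]) ω * g (X ω j))) μ := hcgG.const_mul 2
    rw [hk, integral_sub hint1 hint2, integral_add hGsq hcgsq, integral_const_mul, ecross]
    ring
  -- ∫ W₁² = ∫ G² - c²
  have e1 : ∫ ω, (g (X ω j) - ∫ ω', g (X ω' j) ∂μ) ^ 2 ∂μ
      = ∫ ω, (g (X ω j)) ^ 2 ∂μ - (∫ ω', g (X ω' j) ∂μ) ^ 2 := by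
    have hk : (fun ω => (g (X ω j) - ∫ ω', g (X ω' j) ∂μ) ^ 2)
        = fun ω => ((g (X ω j)) ^ 2 + (∫ ω', g (X ω' j) ∂μ) ^ 2)
          - (2 * ∫ ω', g (X ω' j) ∂μ) * g (X ω j) := by
      funext ω; ring
    have hint1 : Integrable
        (fun ω => (g (X ω j)) ^ 2 + (∫ ω', g (X ω' j) ∂μ) ^ 2) μ :=
      hGsq.add (integrable_const _)
    have hint2 : Integrable
        (fun ω => (2 * ∫ ω', g (X ω' j) ∂μ) * g (X ω j)) μ := hGi.const_mul _
    rw [hk, integral_sub hint1 hint2, integral_add hGsq (integrable_const _),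
      integral_const_mul, integral_const]
    simp only [probReal_univ, measure_univ, ENNReal.toReal_one, one_smul]
    ring
  -- c² ≤ ∫ cg²
  have e3 : (∫ ω', g (X ω' j) ∂μ) ^ 2 ≤ ∫ ω, (μ[fun ω'' => g (X ω'' j)|m1]) ω ^ 2 ∂μ := by
    have hveq := variance_nonneg (μ[fun ω'' => g (X ω'' j)|m1]) μ
    rw [variance_eq_sub hcgmem] at hveq
    simp only [Pi.pow_apply] at hveq
    have hceq : ∫ ω, (μ[fun ω'' => g (X ω'' j)|m1]) ω ∂μ = ∫ ω', g (X ω' j) ∂μ :=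
      integral_condExp hm1
    rw [hceq] at hveq
    linarith
  have hI1 : ς₁ ≤ ∫ ω, (g (X ω j) - ∫ ω', g (X ω' j) ∂μ) ^ 2 ∂μ := by
    rw [e1]
    rw [e2] at hI2
    linarith
  -- apply the abstract lemma
  have main1 := aux_main h12 hm2 Y (fun ω => g (X ω j) - ∫ ω', g (X ω' j) ∂μ)
    hYmem hW1SM hW1bd ς₂ hς₂
  have main2 := aux_main h12 hm2 Y
    (fun ω => g (X ω j) - (μ[fun ω'' => g (X ω'' j)|m1]) ω)
    hYmem hW2SM hW2bd ς₂ hς₂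
  have hq1 : ς₂ * ς₁ ^ 2 / 4 ≤ ς₂ * ∫ ω, (g (X ω j) - ∫ ω', g (X ω' j) ∂μ) ^ 2 ∂μ := by
    have hς₁le1 : ς₁ ≤ 1 := le_trans hI2 hub2
    nlinarith [mul_le_mul_of_nonneg_left hI1 hς₂pos.le,
      mul_le_mul_of_nonneg_left hς₁le1 (mul_nonneg hς₂pos.le hς₁pos.le),
      mul_nonneg (mul_nonneg hς₂pos.le hς₁pos.le) hς₁pos.le]
  have hq2 : ς₂ * ς₁ ^ 2 / 4 ≤
      ς₂ * ∫ ω, (g (X ω j) - (μ[fun ω'' => g (X ω'' j)|m1]) ω) ^ 2 ∂μ := by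
    have hς₁le1 : ς₁ ≤ 1 := le_trans hI2 hub2
    nlinarith [mul_le_mul_of_nonneg_left hI2 hς₂pos.le,
      mul_le_mul_of_nonneg_left hς₁le1 (mul_nonneg hς₂pos.le hς₁pos.le),
      mul_nonneg (mul_nonneg hς₂pos.le hς₁pos.le) hς₁pos.le]
  exact ⟨le_trans hq1 main1.1, le_trans hq2 main2.1, main1.2, main2.2⟩
end

section
/- Suppose Xⱼ is a null feature, Ŷ is constructed from the independent training sample and satisfies Condition 1 with rate B₁, {(Xᵢ, Yᵢ)}_{i=1}^n are i.i.d. copies of (X, Y) independent of the training sample, E Y² < ∞, and g : [0,1] → ℝ is measurable with sup_{x∈[0,1]} |g(x)| ≤ M < ∞. Then E{n^{−1/2} Σ_{i=1}^n [Yᵢ − Ŷ(X₋ᵢⱼ)][g(Xᵢⱼ) − E g(Xⱼ)]} = √n · E{[E(Y | X₋ⱼ) − Ŷ(X₋ⱼ)][g(Xⱼ) − E g(Xⱼ)]}, and its absolute value is at most 2M·√(B₁·n). -/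
open MeasureTheory ProbabilityTheory

section AuxLemmas

lemma aux_cs' {Ω : Type} [MeasurableSpace Ω] {μ : Measure Ω} [IsProbabilityMeasure μ]
    {f : Ω → ℝ} (h1 : Integrable f μ) (h2 : Integrable (fun ω => f ω ^ 2) μ) :
    ∫ ω, |f ω| ∂μ ≤ Real.sqrt (∫ ω, f ω ^ 2 ∂μ) := by
  set a := ∫ ω, |f ω| ∂μ with ha
  have ha0 : 0 ≤ a := integral_nonneg fun ω => abs_nonneg _
  have hb0 : 0 ≤ ∫ ω, f ω ^ 2 ∂μ := integral_nonneg fun ω => sq_nonneg _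
  rw [Real.le_sqrt ha0 hb0]
  have key : 0 ≤ ∫ ω, (|f ω| - a) ^ 2 ∂μ := integral_nonneg fun ω => sq_nonneg _
  have h4 : Integrable (fun ω => f ω ^ 2 - 2 * a * |f ω|) μ := h2.sub (h1.abs.const_mul _)
  have expand : ∫ ω, (|f ω| - a) ^ 2 ∂μ = (∫ ω, f ω ^ 2 ∂μ) - a ^ 2 := by
    have heq : (fun ω => (|f ω| - a) ^ 2)
        = fun ω => (f ω ^ 2 - 2 * a * |f ω|) + a ^ 2 := by
      funext ω; nlinarith [sq_abs (f ω)]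
    rw [heq, integral_add h4 (integrable_const _),
      integral_sub h2 (h1.abs.const_mul _), integral_const, integral_const_mul]
    simp [← ha]
    ring
  nlinarith [key, expand]

lemma aux_null' {Ω : Type} {m' : MeasurableSpace Ω} [mΩ : MeasurableSpace Ω]
    [StandardBorelSpace Ω] [Nonempty Ω]
    {μ : Measure Ω} [IsProbabilityMeasure μ] (hm' : m' ≤ mΩ)
    {Z Y : Ω → ℝ} (hZ : Measurable Z) (hY : Measurable Y) (hYint : Integrable Y μ)
    (hnull : CondIndepFun m' hm' Z Y μ)
    {φ : ℝ → ℝ} (hφ : Measurable φ) {C : ℝ} (hC : ∀ ω, |φ (Z ω)| ≤ C) :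
    ∫ ω, Y ω * φ (Z ω) ∂μ = ∫ ω, (μ[Y|m']) ω * φ (Z ω) ∂μ := by
  set κ := condExpKernel μ m' with hκ
  have hae : ∀ᵐ ω ∂μ, ∀ q r : ℚ,
      κ ω (Z ⁻¹' Set.Iio (q : ℝ) ∩ Y ⁻¹' Set.Iio (r : ℝ))
        = κ ω (Z ⁻¹' Set.Iio (q : ℝ)) * κ ω (Y ⁻¹' Set.Iio (r : ℝ)) := by
    refine ae_of_ae_trim hm' ?_
    rw [MeasureTheory.ae_all_iff]
    intro q
    rw [MeasureTheory.ae_all_iff]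
    intro r
    exact hnull _ _ ⟨_, measurableSet_Iio, rfl⟩ ⟨_, measurableSet_Iio, rfl⟩
  have hind : ∀ᵐ ω ∂μ, IndepFun Z Y (κ ω) := by
    filter_upwards [hae] with ω hω
    haveI : IsProbabilityMeasure (κ ω) := IsMarkovKernel.isProbabilityMeasure ω
    have h1 : (inferInstance : MeasurableSpace ℝ).comap Z
        = MeasurableSpace.generateFrom (Set.preimage Z '' (⋃ a : ℚ, {Set.Iio (a : ℝ)})) := by
      conv_lhs => rw [BorelSpace.measurable_eq (α := ℝ), Real.borel_eq_generateFrom_Iio_rat]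
      exact MeasurableSpace.comap_generateFrom
    have h2 : (inferInstance : MeasurableSpace ℝ).comap Y
        = MeasurableSpace.generateFrom (Set.preimage Y '' (⋃ a : ℚ, {Set.Iio (a : ℝ)})) := by
      conv_lhs => rw [BorelSpace.measurable_eq (α := ℝ), Real.borel_eq_generateFrom_Iio_rat]
      exact MeasurableSpace.comap_generateFrom
    refine IndepSets.indep hZ.comap_le hY.comap_le
      (Real.isPiSystem_Iio_rat.comap Z) (Real.isPiSystem_Iio_rat.comap Y) h1 h2 ?_
    rintro t1 t2 ⟨s1, hs1, rfl⟩ ⟨s2, hs2, rfl⟩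
    obtain ⟨q, hq⟩ := Set.mem_iUnion.mp hs1
    obtain ⟨r, hr⟩ := Set.mem_iUnion.mp hs2
    rw [Set.mem_singleton_iff] at hq hr
    subst hq; subst hr
    exact Filter.Eventually.of_forall fun _ => hω q r
  have hGmeas : Measurable fun ω => φ (Z ω) := hφ.comp hZ
  have hCbd : ∀ᵐ ω ∂μ, ‖φ (Z ω)‖ ≤ C := Filter.Eventually.of_forall fun ω => by
    simpa using hC ω
  have hGint : Integrable (fun ω => φ (Z ω)) μ :=
    (integrable_const C).mono' hGmeas.aestronglyMeasurable hCbd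
  have hYG : Integrable (fun ω => Y ω * φ (Z ω)) μ :=
    (hYint.bdd_mul hGmeas.aestronglyMeasurable hCbd).congr
      (Filter.Eventually.of_forall fun ω => mul_comm _ _)
  have hmYG : Integrable (fun ω => (μ[Y|m']) ω * φ (Z ω)) μ :=
    ((integrable_condExp (f := Y) (m := m')).bdd_mul hGmeas.aestronglyMeasurable hCbd).congr
      (Filter.Eventually.of_forall fun ω => mul_comm _ _)
  have e1 : μ[fun ω => Y ω * φ (Z ω)|m']
      =ᵐ[μ] fun ω => (μ[Y|m']) ω * (μ[fun ω' => φ (Z ω')|m']) ω := by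
    have hk1 := condExp_ae_eq_integral_condExpKernel hm' hYG
    have hk2 := condExp_ae_eq_integral_condExpKernel hm' hYint
    have hk3 := condExp_ae_eq_integral_condExpKernel hm' hGint
    filter_upwards [hk1, hk2, hk3, hind] with ω hω1 hω2 hω3 hω4
    rw [hω1, hω2, hω3]
    haveI : IsProbabilityMeasure (κ ω) := IsMarkovKernel.isProbabilityMeasure ω
    have := (hω4.symm.comp measurable_id hφ).integral_fun_mul_eq_mul_integral
      (μ := κ ω) hY.aestronglyMeasurable hGmeas.aestronglyMeasurable
    simpa [Function.comp] using this
  have e2 : μ[fun ω => (μ[Y|m']) ω * φ (Z ω)|m']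
      =ᵐ[μ] fun ω => (μ[Y|m']) ω * (μ[fun ω' => φ (Z ω')|m']) ω :=
    condExp_mul_of_stronglyMeasurable_left stronglyMeasurable_condExp hmYG hGint
  haveI : SigmaFinite (μ.trim hm') := inferInstance
  calc ∫ ω, Y ω * φ (Z ω) ∂μ
      = ∫ ω, (μ[fun ω' => Y ω' * φ (Z ω')|m']) ω ∂μ := (integral_condExp hm').symm
    _ = ∫ ω, (μ[Y|m']) ω * (μ[fun ω' => φ (Z ω')|m']) ω ∂μ := integral_congr_ae e1
    _ = ∫ ω, (μ[fun ω' => (μ[Y|m']) ω' * φ (Z ω')|m']) ω ∂μ := (integral_congr_ae e2).symm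
    _ = ∫ ω, (μ[Y|m']) ω * φ (Z ω) ∂μ := integral_condExp hm'

end AuxLemmas


/-- **Bias identity and bound for the basic FACT numerator** (equation (A.1)/(2.4) of the
paper).  Suppose `Xⱼ` is a null feature, `Ŷ` is built from the independent training sample and
satisfies Condition 1 with rate `B₁`, the inference sample consists of i.i.d. copies of
`(X, Y)` independent of the training sample, `E Y² < ∞`, and `g` is measurable with
`sup_{x∈[0,1]} |g(x)| ≤ M`.  Then
`E{n^{-1/2} Σᵢ [Yᵢ − Ŷ(X₋ᵢⱼ)][g(Xᵢⱼ) − E g(Xⱼ)]}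
  = √n · E{[E(Y|X₋ⱼ) − Ŷ(X₋ⱼ)][g(Xⱼ) − E g(Xⱼ)]}`,
and its absolute value is at most `2M √(B₁ n)`. -/
theorem stmt_17
    (Ω : Type) [MeasurableSpace Ω] [StandardBorelSpace Ω] [Nonempty Ω]
    (μ : Measure Ω) [IsProbabilityMeasure μ]
    (p : ℕ) (j : Fin p) (X : Ω → Fin p → ℝ) (Y : Ω → ℝ)
    (hX : Measurable X) (hY : Measurable Y)
    (hXrange : ∀ ω k, X ω k ∈ Set.Icc (0 : ℝ) 1)
    (hY2 : Integrable (fun ω => (Y ω) ^ 2) μ)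
    (g : ℝ → ℝ) (hg : Measurable g)
    (M : ℝ) (hM : ∀ x ∈ Set.Icc (0 : ℝ) 1, |g x| ≤ M)
    (n : ℕ) (Xs : Fin n → Ω → Fin p → ℝ) (Ys : Fin n → Ω → ℝ)
    (hXs : ∀ i, Measurable (Xs i)) (hYs : ∀ i, Measurable (Ys i))
    (𝒯 : Type) [m𝒯 : MeasurableSpace 𝒯] (T : Ω → 𝒯) (hT : Measurable T)
    (Yhat : 𝒯 → ({k : Fin p // k ≠ j} → ℝ) → ℝ)
    (hYhat : Measurable (fun q : 𝒯 × ({k : Fin p // k ≠ j} → ℝ) => Yhat q.1 q.2))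
    (B₁ : ℝ) (hB₁ : 0 ≤ B₁)
    (hXmj : Measurable (fun ω (k : {k : Fin p // k ≠ j}) => X ω k.1))
    -- the inference sample observations have the same distribution as (X, Y)
    (hiid : ∀ i, IdentDistrib (fun ω => (Xs i ω, Ys i ω)) (fun ω => (X ω, Y ω)) μ μ)
    -- the inference sample together with the fresh copy (X, Y) is jointly independent
    (hindep : iIndepFun
      (fun i ω => Option.elim i (X ω, Y ω) (fun k => (Xs k ω, Ys k ω))) μ)
    -- the training data T is independent of the inference sample and of (X, Y)
    (hindepT : IndepFun T (fun ω => ((fun i : Fin n => (Xs i ω, Ys i ω)), (X ω, Y ω))) μ)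
    -- Xⱼ is a null feature
    (hnull : CondIndepFun
      (MeasurableSpace.comap (fun ω (k : {k : Fin p // k ≠ j}) => X ω k.1) inferInstance)
      hXmj.comap_le (fun ω => X ω j) Y μ)
    -- Condition 1
    (hcond1 : ∫⁻ ω, ENNReal.ofReal
        (((μ[Y | MeasurableSpace.comap
            (fun ω' (k : {k : Fin p // k ≠ j}) => X ω' k.1) inferInstance]) ω
          - Yhat (T ω) (fun k => X ω k.1)) ^ 2) ∂μ ≤ ENNReal.ofReal B₁) :
    ((∫ ω, (∑ i, (Ys i ω - Yhat (T ω) (fun k => Xs i ω k.1))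
          * (g (Xs i ω j) - ∫ ω', g (X ω' j) ∂μ)) / Real.sqrt n ∂μ) =
      Real.sqrt n * ∫ ω,
        ((μ[Y | MeasurableSpace.comap
            (fun ω' (k : {k : Fin p // k ≠ j}) => X ω' k.1) inferInstance]) ω
          - Yhat (T ω) (fun k => X ω k.1))
        * (g (X ω j) - ∫ ω', g (X ω' j) ∂μ) ∂μ) ∧
    |∫ ω, (∑ i, (Ys i ω - Yhat (T ω) (fun k => Xs i ω k.1))
        * (g (Xs i ω j) - ∫ ω', g (X ω' j) ∂μ)) / Real.sqrt n ∂μ| ≤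
      2 * M * Real.sqrt (B₁ * n) := by
  have hXj : Measurable fun ω => X ω j := (measurable_pi_apply j).comp hX
  set c : ℝ := ∫ ω', g (X ω' j) ∂μ with hc
  set mY : Ω → ℝ := μ[Y | MeasurableSpace.comap
      (fun ω' (k : {k : Fin p // k ≠ j}) => X ω' k.1) inferInstance] with hmY
  set G : Ω → ℝ := fun ω => g (X ω j) - c with hG
  set Yh : Ω → ℝ := fun ω => Yhat (T ω) (fun k => X ω k.1) with hYh
  set D : Ω → ℝ := fun ω => mY ω - Yh ω with hD
  -- basic bounds
  have hM0 : 0 ≤ M := le_trans (abs_nonneg _) (hM 0 ⟨le_refl 0, zero_le_one⟩)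
  have hgX : ∀ ω, |g (X ω j)| ≤ M := fun ω => hM _ (hXrange ω j)
  have hgXmeas : Measurable fun ω => g (X ω j) := hg.comp hXj
  have hgXint : Integrable (fun ω => g (X ω j)) μ :=
    (integrable_const M).mono' hgXmeas.aestronglyMeasurable
      (Filter.Eventually.of_forall fun ω => by simpa using hgX ω)
  have hcM : |c| ≤ M := by
    rw [hc]
    calc |∫ ω', g (X ω' j) ∂μ| ≤ ∫ ω', |g (X ω' j)| ∂μ := by
          simpa using norm_integral_le_integral_norm (fun ω' => g (X ω' j)) (μ := μ)
      _ ≤ ∫ _ω', M ∂μ := integral_mono hgXint.abs (integrable_const M) fun ω => hgX ω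
      _ = M := by simp
  have hGb : ∀ ω, |G ω| ≤ 2 * M := fun ω => by
    show |g (X ω j) - c| ≤ 2 * M
    calc |g (X ω j) - c| ≤ |g (X ω j)| + |c| := abs_sub _ _
      _ ≤ M + M := add_le_add (hgX ω) hcM
      _ = 2 * M := by ring
  have hGmeas : Measurable G := hgXmeas.sub measurable_const
  have hbd2M : ∀ᵐ ω ∂μ, ‖G ω‖ ≤ 2 * M :=
    Filter.Eventually.of_forall fun ω => by simpa using hGb ω
  have hGint : Integrable G μ := (integrable_const (2 * M)).mono'
    hGmeas.aestronglyMeasurable hbd2M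
  -- integrability
  have hYint : Integrable Y μ :=
    ((memLp_two_iff_integrable_sq hY.aestronglyMeasurable).mpr hY2).integrable one_le_two
  have hmYint : Integrable mY μ := integrable_condExp
  have hmYmeas : Measurable mY := (stronglyMeasurable_condExp.mono hXmj.comap_le).measurable
  have hYhmeas : Measurable Yh := hYhat.comp (hT.prodMk hXmj)
  have hDmeas : Measurable D := hmYmeas.sub hYhmeas
  have hcond1' : ∫⁻ ω, ENNReal.ofReal (D ω ^ 2) ∂μ ≤ ENNReal.ofReal B₁ := hcond1
  have hD2int : Integrable (fun ω => D ω ^ 2) μ := by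
    refine ⟨(hDmeas.pow_const 2).aestronglyMeasurable, ?_⟩
    rw [hasFiniteIntegral_iff_ofReal (Filter.Eventually.of_forall fun ω => sq_nonneg _)]
    exact lt_of_le_of_lt hcond1' ENNReal.ofReal_lt_top
  have hDint : Integrable D μ :=
    ((memLp_two_iff_integrable_sq hDmeas.aestronglyMeasurable).mpr hD2int).integrable one_le_two
  have hD2le : ∫ ω, D ω ^ 2 ∂μ ≤ B₁ := by
    have h := ofReal_integral_eq_lintegral_ofReal hD2int
      (Filter.Eventually.of_forall fun ω => sq_nonneg _)
    rw [← h] at hcond1'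
    exact (ENNReal.ofReal_le_ofReal_iff hB₁).mp hcond1'
  have hDabs : ∫ ω, |D ω| ∂μ ≤ Real.sqrt B₁ :=
    (aux_cs' hDint hD2int).trans (Real.sqrt_le_sqrt hD2le)
  have hYhint : Integrable Yh μ :=
    (hmYint.sub hDint).congr (Filter.Eventually.of_forall fun ω =>
      (by simp [hD] : mY ω - D ω = Yh ω))
  have hmul : ∀ {f : Ω → ℝ}, Integrable f μ → Integrable (fun ω => f ω * G ω) μ :=
    fun hf => (hf.bdd_mul hGmeas.aestronglyMeasurable hbd2M).congr
      (Filter.Eventually.of_forall fun ω => mul_comm _ _)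
  have hYG : Integrable (fun ω => Y ω * G ω) μ := hmul hYint
  have hmYG : Integrable (fun ω => mY ω * G ω) μ := hmul hmYint
  have hYhG : Integrable (fun ω => Yh ω * G ω) μ := hmul hYhint
  have hDG : Integrable (fun ω => D ω * G ω) μ := hmul hDint
  have hFinf : Integrable (fun ω => (Y ω - Yh ω) * G ω) μ :=
    (hYG.sub hYhG).congr (Filter.Eventually.of_forall fun ω => by simp only [Pi.sub_apply]; ring)
  -- null feature step
  have hnullint : ∫ ω, Y ω * G ω ∂μ = ∫ ω, mY ω * G ω ∂μ :=
    aux_null' hXmj.comap_le hXj hY hYint hnull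
      (φ := fun x => g x - c) (hg.sub measurable_const) (C := 2 * M) hGb
  have hfresh : ∫ ω, (Y ω - Yh ω) * G ω ∂μ = ∫ ω, D ω * G ω ∂μ := by
    have h1 : ∫ ω, (Y ω - Yh ω) * G ω ∂μ
        = (∫ ω, Y ω * G ω ∂μ) - ∫ ω, Yh ω * G ω ∂μ := by
      rw [← integral_sub hYG hYhG]
      exact integral_congr_ae (Filter.Eventually.of_forall fun ω => by simp only [Pi.sub_apply]; ring)
    have h2 : ∫ ω, D ω * G ω ∂μ
        = (∫ ω, mY ω * G ω ∂μ) - ∫ ω, Yh ω * G ω ∂μ := by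
      rw [← integral_sub hmYG hYhG]
      exact integral_congr_ae (Filter.Eventually.of_forall fun ω => by simp only [Pi.sub_apply, hD]; ring)
    rw [h1, h2, hnullint]
  -- identical distribution of the inference sample terms
  have hidT : ∀ i : Fin n, IdentDistrib (fun ω => (T ω, (Xs i ω, Ys i ω)))
      (fun ω => (T ω, (X ω, Y ω))) μ μ := by
    intro i
    have hWi : Measurable fun ω => (Xs i ω, Ys i ω) := (hXs i).prodMk (hYs i)
    have hW : Measurable fun ω => (X ω, Y ω) := hX.prodMk hY
    have hTi : IndepFun T (fun ω => (Xs i ω, Ys i ω)) μ :=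
      hindepT.comp measurable_id ((measurable_pi_apply i).comp measurable_fst)
    have hT2 : IndepFun T (fun ω => (X ω, Y ω)) μ :=
      hindepT.comp measurable_id measurable_snd
    refine ⟨(hT.prodMk hWi).aemeasurable, (hT.prodMk hW).aemeasurable, ?_⟩
    rw [(indepFun_iff_map_prod_eq_prod_map_map hT.aemeasurable hWi.aemeasurable).mp hTi,
      (indepFun_iff_map_prod_eq_prod_map_map hT.aemeasurable hW.aemeasurable).mp hT2,
      (hiid i).map_eq]
  have hrestr : Measurable fun q : 𝒯 × ((Fin p → ℝ) × ℝ) =>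
      (fun k : {k : Fin p // k ≠ j} => q.2.1 k.1) :=
    measurable_pi_lambda _ fun k =>
      (measurable_pi_apply k.1).comp (measurable_fst.comp measurable_snd)
  have hF : Measurable fun q : 𝒯 × ((Fin p → ℝ) × ℝ) =>
      (q.2.2 - Yhat q.1 (fun k => q.2.1 k.1)) * (g (q.2.1 j) - c) :=
    ((measurable_snd.comp measurable_snd).sub
        (hYhat.comp (measurable_fst.prodMk hrestr))).mul
      ((hg.comp ((measurable_pi_apply j).comp (measurable_fst.comp measurable_snd))).sub
        measurable_const)
  have hcompi : ∀ i : Fin n, IdentDistrib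
      (fun ω => (Ys i ω - Yhat (T ω) (fun k => Xs i ω k.1)) * (g (Xs i ω j) - c))
      (fun ω => (Y ω - Yh ω) * G ω) μ μ := fun i => (hidT i).comp hF
  have hInti : ∀ i : Fin n, Integrable
      (fun ω => (Ys i ω - Yhat (T ω) (fun k => Xs i ω k.1)) * (g (Xs i ω j) - c)) μ :=
    fun i => (hcompi i).integrable_iff.mpr hFinf
  have hEqi : ∀ i : Fin n,
      ∫ ω, (Ys i ω - Yhat (T ω) (fun k => Xs i ω k.1)) * (g (Xs i ω j) - c) ∂μ
        = ∫ ω, D ω * G ω ∂μ :=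
    fun i => (hcompi i).integral_eq.trans hfresh
  -- assembly
  set J := ∫ ω, D ω * G ω ∂μ with hJdef
  have hL : (∫ ω, (∑ i, (Ys i ω - Yhat (T ω) (fun k => Xs i ω k.1))
      * (g (Xs i ω j) - c)) / Real.sqrt n ∂μ) = Real.sqrt n * J := by
    rw [integral_div, integral_finset_sum Finset.univ (fun i _ => hInti i),
      Finset.sum_congr rfl (fun i _ => hEqi i), Finset.sum_const, Finset.card_univ,
      Fintype.card_fin, nsmul_eq_mul]
    rcases Nat.eq_zero_or_pos n with h0 | h0
    · subst h0; simp
    · have hs : Real.sqrt n ≠ 0 :=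
        ne_of_gt (Real.sqrt_pos.mpr (by exact_mod_cast h0))
      have h2 : Real.sqrt n * Real.sqrt n = (n : ℝ) := Real.mul_self_sqrt (Nat.cast_nonneg n)
      rw [div_eq_iff hs]
      linear_combination (-J) * h2
  have hJb : |J| ≤ 2 * M * Real.sqrt B₁ := by
    have h2M : (0 : ℝ) ≤ 2 * M := by linarith
    have habs : Integrable (fun ω => |D ω| * |G ω|) μ :=
      hDG.abs.congr (Filter.Eventually.of_forall fun ω => abs_mul _ _)
    calc |J| ≤ ∫ ω, |D ω| * |G ω| ∂μ := by
          simpa using norm_integral_le_integral_norm (fun ω => D ω * G ω) (μ := μ)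
      _ ≤ ∫ ω, 2 * M * |D ω| ∂μ := by
          refine integral_mono habs (hDint.abs.const_mul _) fun ω => ?_
          calc |D ω| * |G ω| ≤ |D ω| * (2 * M) :=
                mul_le_mul_of_nonneg_left (hGb ω) (abs_nonneg _)
            _ = 2 * M * |D ω| := by ring
      _ = 2 * M * ∫ ω, |D ω| ∂μ := integral_const_mul _ _
      _ ≤ 2 * M * Real.sqrt B₁ := mul_le_mul_of_nonneg_left hDabs h2M
  constructor
  · exact hL
  · rw [hL, abs_mul, abs_of_nonneg (Real.sqrt_nonneg _)]
    calc Real.sqrt n * |J| ≤ Real.sqrt n * (2 * M * Real.sqrt B₁) :=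
          mul_le_mul_of_nonneg_left hJb (Real.sqrt_nonneg _)
      _ = 2 * M * Real.sqrt (B₁ * n) := by rw [Real.sqrt_mul hB₁]; ring
end

section
/- Let n be a positive integer, let A_{l,i} be real numbers for l ∈ {1, 2, 3, 4} and i ∈ {1, …, n}, and let σ > 0 satisfy σ² ≥ |n⁻¹ Σ_{i=1}^n (A_{1,i}² − σ²)|. Define Sᵢ = A_{1,i} + A_{2,i} + A_{3,i} + A_{4,i} and let σ̂ = (n⁻¹ Σ_{i=1}^n (Sᵢ − n⁻¹ Σ_{i'=1}^n S_{i'})²)^{1/2} be the sample standard deviation of S₁, …, Sₙ. Then |σ̂ − σ| ≤ |(nσ)⁻¹ Σ_{i=1}^n (A_{1,i}² − σ²)| + Σ_{l=2}^4 (n⁻¹ Σ_{i=1}^n A_{l,i}²)^{1/2} + |n⁻¹ Σ_{i=1}^n Sᵢ|. -/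
private lemma stmt_19_tri {n : ℕ} (f g : Fin n → ℝ) :
    Real.sqrt (∑ i, (f i + g i)^2) ≤ Real.sqrt (∑ i, (f i)^2) + Real.sqrt (∑ i, (g i)^2) := by
  have h := norm_add_le ((WithLp.equiv 2 (Fin n → ℝ)).symm f) ((WithLp.equiv 2 (Fin n → ℝ)).symm g)
  simp only [EuclideanSpace.norm_eq, WithLp.equiv_symm_apply, PiLp.toLp_apply, Real.norm_eq_abs, sq_abs,
    ← WithLp.toLp_add] at h
  simpa using h

/-- **A deterministic inequality for the sample standard deviation.**  Let `A_{l,i}` be real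
numbers for `l ∈ {1, 2, 3, 4}`, `i ∈ {1, …, n}`, and let `σ > 0` satisfy
`σ² ≥ |n⁻¹ Σᵢ (A_{1,i}² − σ²)|`.  With `Sᵢ = A_{1,i} + A_{2,i} + A_{3,i} + A_{4,i}` and `σ̂`
the sample standard deviation of `S₁, …, Sₙ`,
`|σ̂ − σ| ≤ |(nσ)⁻¹ Σᵢ (A_{1,i}² − σ²)| + Σ_{l=2}^4 (n⁻¹ Σᵢ A_{l,i}²)^{1/2} + |n⁻¹ Σᵢ Sᵢ|`. -/
theorem stmt_19 (n : ℕ) (hn : 0 < n) (A : Fin 4 → Fin n → ℝ) (σ : ℝ) (hσ : 0 < σ)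
    (hσ2 : |(∑ i, ((A 0 i) ^ 2 - σ ^ 2)) / n| ≤ σ ^ 2) :
    let S : Fin n → ℝ := fun i => A 0 i + A 1 i + A 2 i + A 3 i;
    let σhat : ℝ := Real.sqrt ((∑ i, (S i - (∑ i', S i') / n) ^ 2) / n);
    |σhat - σ| ≤ |(∑ i, ((A 0 i) ^ 2 - σ ^ 2)) / (n * σ)|
      + (Real.sqrt ((∑ i, (A 1 i) ^ 2) / n) + Real.sqrt ((∑ i, (A 2 i) ^ 2) / n)
          + Real.sqrt ((∑ i, (A 3 i) ^ 2) / n))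
      + |(∑ i, S i) / n| := by
  intro S σhat
  have hn' : (0:ℝ) < n := Nat.cast_pos.mpr hn
  set N : (Fin n → ℝ) → ℝ := fun f => Real.sqrt ((∑ i, (f i)^2)/n) with hN
  have hNnn : ∀ f, 0 ≤ N f := fun f => Real.sqrt_nonneg _
  have hNeq : ∀ f : Fin n → ℝ, N f = Real.sqrt (∑ i, (f i)^2) / Real.sqrt n := by
    intro f
    rw [hN]
    exact Real.sqrt_div (by positivity) _
  have htri : ∀ f g : Fin n → ℝ, N (fun i => f i + g i) ≤ N f + N g := by
    intro f g
    rw [hNeq, hNeq, hNeq, ← add_div]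
    gcongr
    exact stmt_19_tri f g
  have hneg : ∀ f : Fin n → ℝ, N (fun i => - f i) = N f := by
    intro f; rw [hN]; simp
  have hconst : ∀ c : ℝ, N (fun _ => c) = |c| := by
    intro c
    rw [hN]
    simp only [Finset.sum_const, Finset.card_univ, Fintype.card_fin, nsmul_eq_mul]
    rw [show (n:ℝ) * c ^ 2 / n = c ^ 2 by field_simp, Real.sqrt_sq_eq_abs]
  set Sb : ℝ := (∑ i, S i) / n with hSb
  set D : ℝ := (∑ i, ((A 0 i) ^ 2 - σ ^ 2)) / n with hDdef
  -- step 1: |σhat - N S| ≤ |Sb|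
  have hσhat : σhat = N (fun i => S i - Sb) := rfl
  have h1a : N S ≤ σhat + |Sb| := by
    have := htri (fun i => S i - Sb) (fun _ => Sb)
    rw [hconst] at this
    simpa [hσhat] using this
  have h1b : σhat ≤ N S + |Sb| := by
    have := htri S (fun _ => -Sb)
    rw [hneg (fun _ => Sb), hconst] at this
    calc σhat = N (fun i => S i + -Sb) := rfl
    _ ≤ N S + |Sb| := this
  have h1 : |σhat - N S| ≤ |Sb| := abs_sub_le_iff.mpr ⟨by linarith, by linarith⟩
  -- step 2: |N S - N (A 0)| ≤ N (A 1) + N (A 2) + N (A 3)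
  have h2a : N S ≤ N (A 0) + (N (A 1) + N (A 2) + N (A 3)) := by
    calc N S = N (fun i => (A 0 i + A 1 i + A 2 i) + A 3 i) := rfl
    _ ≤ N (fun i => A 0 i + A 1 i + A 2 i) + N (A 3) := htri _ _
    _ ≤ (N (fun i => A 0 i + A 1 i) + N (A 2)) + N (A 3) := by
        gcongr; exact htri _ _
    _ ≤ ((N (A 0) + N (A 1)) + N (A 2)) + N (A 3) := by
        gcongr; exact htri _ _
    _ = N (A 0) + (N (A 1) + N (A 2) + N (A 3)) := by ring
  have h2b : N (A 0) ≤ N S + (N (A 1) + N (A 2) + N (A 3)) := by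
    calc N (A 0) = N (fun i => ((S i + - A 1 i) + - A 2 i) + - A 3 i) := by
          have : (fun i => ((S i + - A 1 i) + - A 2 i) + - A 3 i) = A 0 := by
            funext i; simp [S]; ring
          rw [this]
    _ ≤ N (fun i => (S i + - A 1 i) + - A 2 i) + N (fun i => - A 3 i) := htri _ _
    _ ≤ (N (fun i => S i + - A 1 i) + N (fun i => - A 2 i)) + N (fun i => - A 3 i) := by
        gcongr; exact htri _ _
    _ ≤ ((N S + N (fun i => - A 1 i)) + N (fun i => - A 2 i)) + N (fun i => - A 3 i) := by
        gcongr; exact htri _ _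
    _ = N S + (N (A 1) + N (A 2) + N (A 3)) := by
        rw [hneg (A 1), hneg (A 2), hneg (A 3)]; ring
  have h2 : |N S - N (A 0)| ≤ N (A 1) + N (A 2) + N (A 3) :=
    abs_sub_le_iff.mpr ⟨by linarith, by linarith⟩
  -- step 3: |N (A 0) - σ| ≤ |D| / σ
  have hsq : (N (A 0))^2 = σ^2 + D := by
    rw [hN]
    simp only
    rw [Real.sq_sqrt (by positivity)]
    rw [hDdef, Finset.sum_sub_distrib, Finset.sum_const, Finset.card_univ, Fintype.card_fin,
      nsmul_eq_mul]
    field_simp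
    ring
  have h3 : |N (A 0) - σ| ≤ |D| / σ := by
    rw [le_div_iff₀ hσ]
    have h0 : 0 ≤ N (A 0) + σ := by have := hNnn (A 0); linarith
    have key : |N (A 0) - σ| * (N (A 0) + σ) = |D| := by
      rw [← abs_of_nonneg h0, ← abs_mul]
      congr 1
      linear_combination hsq
    nlinarith [key, mul_nonneg (abs_nonneg (N (A 0) - σ)) (hNnn (A 0))]
  -- combine
  have hRHS1 : |(∑ i, ((A 0 i) ^ 2 - σ ^ 2)) / (n * σ)| = |D| / σ := by
    rw [← div_div, ← hDdef, abs_div, abs_of_pos hσ]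
  have htot : |σhat - σ| ≤ |σhat - N S| + |N S - N (A 0)| + |N (A 0) - σ| := by
    have := abs_sub_le σhat (N S) σ
    have := abs_sub_le (N S) (N (A 0)) σ
    calc |σhat - σ| ≤ |σhat - N S| + |N S - σ| := abs_sub_le _ _ _
      _ ≤ |σhat - N S| + (|N S - N (A 0)| + |N (A 0) - σ|) := by
          gcongr
      _ = _ := by ring
  rw [hRHS1]
  have hNA : N (A 1) + N (A 2) + N (A 3)
      = Real.sqrt ((∑ i, (A 1 i) ^ 2) / n) + Real.sqrt ((∑ i, (A 2 i) ^ 2) / n)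
          + Real.sqrt ((∑ i, (A 3 i) ^ 2) / n) := rfl
  linarith [h1, h2, h3, htot]
end
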